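/- arXiv:1705.03561 — 3 statements merged into one kernel-verified Lean document; each statement's English description precedes it below -/
import Mathlib

section
/- Let H be a 3-uniform linear hypergraph containing no Berge cycle of length 5 and let {a,b,c} be a hyperedge of H. Then |N₁(a) ∩ N₁(b) ∩ N₁(c)| ≤ 1, where N₁(x) is the set of vertices sharing a hyperedge with x. -/
open Finset

/-- Degree of a vertex: number of hyperedges containing it. -/
def hyperDeg {V : Type*} [DecidableEq V] (H : Finset (Finset V)) (v : V) : ℕ :=
  (H.filter fun e => v ∈ e).card

/-- First neighborhood: vertices other than `v` sharing a hyperedge with `v`. -/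
def N1 {V : Type*} [DecidableEq V] (H : Finset (Finset V)) (v : V) : Finset V :=
  ((H.filter fun e => v ∈ e).biUnion id).erase v

/-- Second neighborhood: vertices outside `N1 H v ∪ {v}` lying in a hyperedge
that meets `N1 H v`. -/
def N2 {V : Type*} [DecidableEq V] (H : Finset (Finset V)) (v : V) : Finset V :=
  ((H.filter fun e => (e ∩ N1 H v).Nonempty).biUnion id) \ insert v (N1 H v)

/-- A hypergraph is linear if any two distinct hyperedges share at most one vertex. -/
def IsLinear {V : Type*} [DecidableEq V] (H : Finset (Finset V)) : Prop :=
  ∀ e ∈ H, ∀ f ∈ H, e ≠ f → (e ∩ f).card ≤ 1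

/-- A Berge cycle of length `k`: `k` distinct vertices and `k` distinct hyperedges,
with `v i, v (i+1) ∈ h i` cyclically. -/
def HasBergeCycle {V : Type*} (H : Finset (Finset V)) (k : ℕ) : Prop :=
  ∃ (v : ZMod k → V) (h : ZMod k → Finset V),
    Function.Injective v ∧ Function.Injective h ∧
    ∀ i, h i ∈ H ∧ v i ∈ h i ∧ v (i + 1) ∈ h i

lemma mem_N1' {V : Type*} [DecidableEq V] {H : Finset (Finset V)} {v x : V} :
    x ∈ N1 H v ↔ x ≠ v ∧ ∃ e ∈ H, v ∈ e ∧ x ∈ e := by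
  simp [N1, Finset.mem_erase, Finset.mem_biUnion, Finset.mem_filter, and_assoc]

lemma four_not {V : Type*} [DecidableEq V] {f : Finset V} (hf : f.card = 3)
    {s t u w : V} (hs : s ∈ f) (ht : t ∈ f) (hu : u ∈ f) (hw : w ∈ f)
    (h1 : s ≠ t) (h2 : s ≠ u) (h3 : s ≠ w) (h4 : t ≠ u) (h5 : t ≠ w) (h6 : u ≠ w) :
    False := by
  have hsub : ({s, t, u, w} : Finset V) ⊆ f := by
    intro z hz; simp at hz; rcases hz with h|h|h|h <;> subst h <;> assumption
  have hcard : ({s, t, u, w} : Finset V).card = 4 := by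
    rw [card_insert_of_notMem (by simp [h1, h2, h3]),
        card_insert_of_notMem (by simp [h4, h5]),
        card_insert_of_notMem (by simp [h6]), card_singleton]
  have := Finset.card_le_card hsub
  omega

lemma pair_not {V : Type*} [DecidableEq V] {H : Finset (Finset V)} (hLin : IsLinear H)
    {f g : Finset V} (hf : f ∈ H) (hg : g ∈ H) (hfg : f ≠ g)
    {s t : V} (hst : s ≠ t) (hsf : s ∈ f) (hsg : s ∈ g) (htf : t ∈ f) (htg : t ∈ g) :
    False := by
  have hsub : ({s, t} : Finset V) ⊆ f ∩ g := by
    intro z hz; simp at hz; rcases hz with h|h <;> subst h <;> simp [*, Finset.mem_inter]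
  have : ({s, t} : Finset V).card = 2 := by
    rw [card_insert_of_notMem (by simp [hst]), card_singleton]
  have h1 := Finset.card_le_card hsub
  have h2 := hLin f hf g hg hfg
  omega

lemma aux_cycle {V : Type*} [DecidableEq V] {H : Finset (Finset V)}
    (hUnif : ∀ e ∈ H, e.card = 3) (hLin : IsLinear H)
    {e f1 f2 f3 f4 : Finset V} {p q r x y : V}
    (he : e ∈ H) (hf1 : f1 ∈ H) (hf2 : f2 ∈ H) (hf3 : f3 ∈ H) (hf4 : f4 ∈ H)
    (hp : p ∈ e) (hq : q ∈ e) (hr : r ∈ e)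
    (hxe : x ∉ e) (hye : y ∉ e)
    (hpq : p ≠ q) (hpr : p ≠ r) (hqr : q ≠ r) (hxy : x ≠ y)
    (h1p : p ∈ f1) (h1x : x ∈ f1)
    (h2q : q ∈ f2) (h2y : y ∈ f2)
    (h3r : r ∈ f3) (h3y : y ∈ f3)
    (h4r : r ∈ f4) (h4x : x ∈ f4)
    (h34 : f3 ≠ f4) :
    HasBergeCycle H 5 := by
  have hxp : x ≠ p := fun h => hxe (h ▸ hp)
  have hxq : x ≠ q := fun h => hxe (h ▸ hq)
  have hxr : x ≠ r := fun h => hxe (h ▸ hr)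
  have hyp : y ≠ p := fun h => hye (h ▸ hp)
  have hyq : y ≠ q := fun h => hye (h ▸ hq)
  have hyr : y ≠ r := fun h => hye (h ▸ hr)
  have hf1e : f1 ≠ e := fun h => hxe (h ▸ h1x)
  have hf2e : f2 ≠ e := fun h => hye (h ▸ h2y)
  have hf3e : f3 ≠ e := fun h => hye (h ▸ h3y)
  have hf4e : f4 ≠ e := fun h => hxe (h ▸ h4x)
  have hf12 : f1 ≠ f2 := by
    intro h; subst h
    exact four_not (hUnif _ hf1) h1p h1x h2q h2y hxp.symm hpq hyp.symm hxq hxy hyq.symm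
  have hf13 : f1 ≠ f3 := by
    intro h; subst h
    exact four_not (hUnif _ hf1) h1p h1x h3r h3y hxp.symm hpr hyp.symm hxr hxy hyr.symm
  have hf14 : f1 ≠ f4 := by
    intro h; subst h
    exact pair_not hLin hf1 he hf1e hpr h1p hp h4r hr
  have hf23 : f2 ≠ f3 := by
    intro h; subst h
    exact pair_not hLin hf2 he hf2e hqr h2q hq h3r hr
  have hf24 : f2 ≠ f4 := by
    intro h; subst h
    exact four_not (hUnif _ hf2) h2q h2y h4r h4x hyq.symm hqr hxq.symm hyr hxy.symm hxr.symm
  have hcases : ∀ i : ZMod 5, i = 0 ∨ i = 1 ∨ i = 2 ∨ i = 3 ∨ i = 4 := by decide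
  let v : ZMod 5 → V := fun i => if i = 0 then x else if i = 1 then p else if i = 2 then q else if i = 3 then y else r
  let hh : ZMod 5 → Finset V := fun i => if i = 0 then f1 else if i = 1 then e else if i = 2 then f2 else if i = 3 then f3 else f4
  have hv0 : v 0 = x := rfl
  have hv1 : v 1 = p := rfl
  have hv2 : v 2 = q := rfl
  have hv3 : v 3 = y := rfl
  have hv4 : v 4 = r := rfl
  have hh0 : hh 0 = f1 := rfl
  have hh1 : hh 1 = e := rfl
  have hh2 : hh 2 = f2 := rfl
  have hh3 : hh 3 = f3 := rfl
  have hh4 : hh 4 = f4 := rfl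
  have ha0 : (0:ZMod 5) + 1 = 1 := by decide
  have ha1 : (1:ZMod 5) + 1 = 2 := by decide
  have ha2 : (2:ZMod 5) + 1 = 3 := by decide
  have ha3 : (3:ZMod 5) + 1 = 4 := by decide
  have ha4 : (4:ZMod 5) + 1 = 0 := by decide
  refine ⟨v, hh, ?_, ?_, ?_⟩
  · intro i j hij
    rcases hcases i with rfl|rfl|rfl|rfl|rfl <;> rcases hcases j with rfl|rfl|rfl|rfl|rfl <;>
      simp only [hv0, hv1, hv2, hv3, hv4] at hij <;> first | rfl | simp_all
  · intro i j hij
    rcases hcases i with rfl|rfl|rfl|rfl|rfl <;> rcases hcases j with rfl|rfl|rfl|rfl|rfl <;>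
      simp only [hh0, hh1, hh2, hh3, hh4] at hij <;> first | rfl | simp_all
  · intro i
    rcases hcases i with rfl|rfl|rfl|rfl|rfl <;>
      simp only [ha0, ha1, ha2, ha3, ha4, hv0, hv1, hv2, hv3, hv4, hh0, hh1, hh2, hh3, hh4] <;>
      exact ⟨by assumption, by assumption, by assumption⟩

theorem stmt_8 {V : Type*} [Fintype V] [DecidableEq V]
    (H : Finset (Finset V))
    (hUnif : ∀ e ∈ H, e.card = 3)
    (hLin : IsLinear H)
    (hNoC5 : ¬ HasBergeCycle H 5)
    (a b c : V) (habc : ({a, b, c} : Finset V) ∈ H) :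
    (N1 H a ∩ N1 H b ∩ N1 H c).card ≤ 1 := by
  by_contra hcard
  push_neg at hcard
  obtain ⟨x, hx, y, hy, hxy⟩ := Finset.one_lt_card.mp hcard
  simp only [Finset.mem_inter] at hx hy
  obtain ⟨⟨hxa, hxb⟩, hxc⟩ := hx
  obtain ⟨⟨hya, hyb⟩, hyc⟩ := hy
  rw [mem_N1'] at hxa hxb hxc hya hyb hyc
  obtain ⟨hxa', fax, hfax, hafax, hxfax⟩ := hxa
  obtain ⟨hxb', fbx, hfbx, hbfbx, hxfbx⟩ := hxb
  obtain ⟨hxc', fcx, hfcx, hcfcx, hxfcx⟩ := hxc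
  obtain ⟨hya', fay, hfay, hafay, hyfay⟩ := hya
  obtain ⟨hyb', fby, hfby, hbfby, hyfby⟩ := hyb
  obtain ⟨hyc', fcy, hfcy, hcfcy, hyfcy⟩ := hyc
  have hcard3 : ({a, b, c} : Finset V).card = 3 := hUnif _ habc
  have hpair : ∀ u w : V, ({u, w} : Finset V).card ≤ 2 :=
    fun u w => le_trans (Finset.card_insert_le _ _) (by simp)
  have hne2 : ∀ u w : V, ¬ (({a, b, c} : Finset V) ⊆ {u, w}) := by
    intro u w hsub
    have h1 := Finset.card_le_card hsub
    have h2 := hpair u w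
    omega
  have hab : a ≠ b := fun h => hne2 a c (by intro z hz; simp at hz ⊢; rcases hz with h'|h'|h' <;> simp [h', h])
  have hac : a ≠ c := fun h => hne2 a b (by intro z hz; simp at hz ⊢; rcases hz with h'|h'|h' <;> simp [h', h])
  have hbc : b ≠ c := fun h => hne2 a b (by intro z hz; simp at hz ⊢; rcases hz with h'|h'|h' <;> simp [h', h])
  have hxe : x ∉ ({a, b, c} : Finset V) := by simp [hxa', hxb', hxc']
  have hye : y ∉ ({a, b, c} : Finset V) := by simp [hya', hyb', hyc']
  have ha : a ∈ ({a, b, c} : Finset V) := by simp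
  have hb : b ∈ ({a, b, c} : Finset V) := by simp
  have hc : c ∈ ({a, b, c} : Finset V) := by simp
  by_cases h34 : fcy ≠ fcx
  · exact hNoC5 (aux_cycle hUnif hLin habc hfax hfby hfcy hfcx ha hb hc hxe hye
      hab hac hbc hxy hafax hxfax hbfby hyfby hcfcy hyfcy hcfcx hxfcx h34)
  · push_neg at h34
    have h34' : fay ≠ fax := by
      intro heq
      by_cases hgg : fcx = fax
      · exact four_not (hUnif _ hfax) hafax hxfax (hgg ▸ hcfcx) (heq ▸ hyfay)
          (fun h => hxe (by simp [h])) hac (fun h => hye (by simp [h]))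
          (fun h => hxe (by simp [h.symm])) hxy (fun h => hye (by simp [h.symm]))
      · exact pair_not hLin hfcx hfax hgg hxy hxfcx hxfax (h34 ▸ hyfcy) (heq ▸ hyfay)
    exact hNoC5 (aux_cycle hUnif hLin habc hfbx hfcy hfay hfax hb hc ha hxe hye
      hbc (Ne.symm hab) (Ne.symm hac) hxy hbfbx hxfbx hcfcy hyfcy hafay hyfay hafax hxfax h34')
end

section
/- Let H be a 3-uniform linear hypergraph on n vertices with no Berge cycle of length 5, with average degree d = 3|E(H)|/n and maximum degree at most 6d. Then the number of 3-links in H (triples of hyperedges h₁, h₂, h₃ with h₁ ∩ h₂ ≠ ∅, h₂ ∩ h₃ ≠ ∅, h₁ ∩ h₃ = ∅) is at least n·d³ − 144·n·d². -/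
open Finset

open Classical in
/-- The number of 3-links: sets of three hyperedges `{h₁, h₂, h₃}` of `H` with
`h₁ ∩ h₂ ≠ ∅`, `h₂ ∩ h₃ ≠ ∅`, `h₁ ∩ h₃ = ∅`. -/
noncomputable def threeLinkCount {V : Type*} [DecidableEq V] (H : Finset (Finset V)) : ℕ :=
  ((H.powersetCard 3).filter fun s =>
    ∃ h₁ h₂ h₃ : Finset V, s = {h₁, h₂, h₃} ∧
      (h₁ ∩ h₂).Nonempty ∧ (h₂ ∩ h₃).Nonempty ∧ h₁ ∩ h₃ = ∅).card



section Aux9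
set_option linter.unusedSectionVars false
variable {V : Type*} [Fintype V] [DecidableEq V]

/-- edges through `u` other than `e`. -/
def aux9F (H : Finset (Finset V)) (u : V) (e : Finset V) : Finset (Finset V) :=
  H.filter fun f => u ∈ f ∧ f ≠ e

/-- triples (e, u, w) with u,w distinct vertices of e ∈ H. -/
def aux9EUW (H : Finset (Finset V)) : Finset (Finset V × V × V) :=
  (H ×ˢ ((univ : Finset V) ×ˢ (univ : Finset V))).filter
    fun x => x.2.1 ∈ x.1 ∧ x.2.2 ∈ x.1 ∧ x.2.1 ≠ x.2.2

/-- all cherry tuples ((e,u,w),f,g). -/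
def aux9T (H : Finset (Finset V)) : Finset ((Finset V × V × V) × Finset V × Finset V) :=
  (aux9EUW H).biUnion fun x => {x} ×ˢ ((aux9F H x.2.1 x.1) ×ˢ (aux9F H x.2.2 x.1))

lemma aux9_mem_T {H : Finset (Finset V)} {t : (Finset V × V × V) × Finset V × Finset V} :
    t ∈ aux9T H ↔
      (t.1.1 ∈ H ∧ t.1.2.1 ∈ t.1.1 ∧ t.1.2.2 ∈ t.1.1 ∧ t.1.2.1 ≠ t.1.2.2) ∧
      (t.2.1 ∈ H ∧ t.1.2.1 ∈ t.2.1 ∧ t.2.1 ≠ t.1.1) ∧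
      (t.2.2 ∈ H ∧ t.1.2.2 ∈ t.2.2 ∧ t.2.2 ≠ t.1.1) := by
  constructor
  · intro ht
    obtain ⟨x, hx, htx⟩ := mem_biUnion.mp ht
    obtain ⟨h1, h2⟩ := mem_product.mp htx
    obtain ⟨hf, hg⟩ := mem_product.mp h2
    have hx1 : t.1 = x := mem_singleton.mp h1
    subst hx1
    obtain ⟨hmem, hprop⟩ := mem_filter.mp hx
    obtain ⟨heH, -⟩ := mem_product.mp hmem
    obtain ⟨hfH, huf, hfe⟩ := mem_filter.mp hf
    obtain ⟨hgH, hwg, hge⟩ := mem_filter.mp hg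
    exact ⟨⟨heH, hprop⟩, ⟨hfH, huf, hfe⟩, ⟨hgH, hwg, hge⟩⟩
  · rintro ⟨⟨heH, hue, hwe, huw⟩, ⟨hfH, huf, hfe⟩, ⟨hgH, hwg, hge⟩⟩
    refine mem_biUnion.mpr ⟨t.1, ?_, ?_⟩
    · exact mem_filter.mpr ⟨mem_product.mpr ⟨heH, mem_product.mpr ⟨mem_univ _, mem_univ _⟩⟩,
        hue, hwe, huw⟩
    · exact mem_product.mpr ⟨mem_singleton.mpr rfl,
        mem_product.mpr ⟨mem_filter.mpr ⟨hfH, huf, hfe⟩, mem_filter.mpr ⟨hgH, hwg, hge⟩⟩⟩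

lemma aux9_card_T (H : Finset (Finset V)) :
    (aux9T H).card =
      ∑ x ∈ aux9EUW H, (aux9F H x.2.1 x.1).card * (aux9F H x.2.2 x.1).card := by
  rw [aux9T, card_biUnion]
  · refine sum_congr rfl fun x hx => ?_
    rw [card_product, card_product, card_singleton, one_mul]
  · intro x hx y hy hxy
    simp only [Function.onFun]
    rw [disjoint_left]
    intro p hp hp'
    have h1 : p.1 = x := mem_singleton.mp (mem_product.mp hp).1
    have h2 : p.1 = y := mem_singleton.mp (mem_product.mp hp').1
    exact hxy (h1 ▸ h2)

lemma aux9_sum_H_mem {M : Type*} [AddCommMonoid M] (H : Finset (Finset V))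
    (f : Finset V → V → M) :
    ∑ e ∈ H, ∑ u ∈ e, f e u = ∑ u : V, ∑ e ∈ H.filter (u ∈ ·), f e u := by
  apply Finset.sum_comm'
  intro x y
  simp [mem_filter, and_comm]

lemma aux9_sum_erase_swap {M : Type*} [AddCommMonoid M] (e : Finset V) (f : V → V → M) :
    ∑ u ∈ e, ∑ w ∈ e.erase u, f u w = ∑ w ∈ e, ∑ u ∈ e.erase w, f u w := by
  apply Finset.sum_comm'
  intro u w
  simp only [mem_erase]
  constructor
  · rintro ⟨hu, hw, hwe⟩; exact ⟨⟨fun h => hw (h ▸ rfl), hu⟩, hwe⟩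
  · rintro ⟨⟨huw, hu⟩, hw⟩; exact ⟨hu, fun h => huw (h ▸ rfl), hw⟩

lemma aux9_sum_EUW {M : Type*} [AddCommMonoid M] (H : Finset (Finset V))
    (f : Finset V → V → V → M) :
    ∑ x ∈ aux9EUW H, f x.1 x.2.1 x.2.2 = ∑ e ∈ H, ∑ u ∈ e, ∑ w ∈ e.erase u, f e u w := by
  rw [aux9EUW, sum_filter, sum_product]
  refine sum_congr rfl fun e he => ?_
  rw [sum_product]
  have huniv : ∀ u : V, (univ : Finset V).filter (fun w => w ∈ e ∧ u ≠ w) = e.erase u := by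
    intro u
    ext w
    simp [mem_erase, and_comm, eq_comm, ne_comm]
  calc ∑ u : V, ∑ w : V, (if u ∈ e ∧ w ∈ e ∧ u ≠ w then f e u w else 0)
      = ∑ u : V, (if u ∈ e then ∑ w ∈ e.erase u, f e u w else 0) := by
        refine sum_congr rfl fun u _ => ?_
        by_cases hu : u ∈ e
        · simp only [hu, true_and, if_true]
          rw [← huniv u, sum_filter]
        · simp [hu]
    _ = ∑ u ∈ e, ∑ w ∈ e.erase u, f e u w := by
        rw [← sum_filter]
        congr 1
        ext u; simp

lemma aux9_deg_pos {H : Finset (Finset V)} {e : Finset V} {v : V} (he : e ∈ H) (hv : v ∈ e) :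
    0 < hyperDeg H v :=
  card_pos.mpr ⟨e, mem_filter.mpr ⟨he, hv⟩⟩

lemma aux9_card_F {H : Finset (Finset V)} {u : V} {e : Finset V} (he : e ∈ H) (hu : u ∈ e) :
    (aux9F H u e).card + 1 = hyperDeg H u := by
  have heq : aux9F H u e = (H.filter fun f => u ∈ f).erase e := by
    ext f
    simp only [aux9F, mem_filter, mem_erase]
    tauto
  rw [heq, card_erase_of_mem (mem_filter.mpr ⟨he, hu⟩)]
  exact Nat.succ_pred_eq_of_pos (aux9_deg_pos he hu)

lemma aux9_card_F_real {H : Finset (Finset V)} {u : V} {e : Finset V} (he : e ∈ H) (hu : u ∈ e) :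
    ((aux9F H u e).card : ℝ) = (hyperDeg H u : ℝ) - 1 := by
  have h := aux9_card_F he hu
  have : ((aux9F H u e).card : ℝ) + 1 = (hyperDeg H u : ℝ) := by exact_mod_cast congrArg Nat.cast h
  linarith


/-- Bound on bad tuples: those with f ∩ g nonempty. -/
lemma aux9_TB_le (H : Finset (Finset V)) (hUnif : ∀ e ∈ H, e.card = 3) (hLin : IsLinear H) :
    ((aux9T H).filter fun t => (t.2.1 ∩ t.2.2).Nonempty).card
      ≤ 9 * ∑ v : V, (hyperDeg H v) ^ 2 := by
  set TB := (aux9T H).filter fun t => (t.2.1 ∩ t.2.2).Nonempty with hTB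
  set ψ : (Finset V × V × V) × Finset V × Finset V → Finset V × Finset V :=
    fun t => (t.2.1, t.2.2) with hψ
  have h1 : TB.card ≤ 9 * (TB.image ψ).card := by
    apply card_le_mul_card_image
    intro b hb
    obtain ⟨t₀, ht₀, hψt₀⟩ := mem_image.mp hb
    have ht₀T := (mem_filter.mp ht₀).1
    obtain ⟨⟨he₀H, -, -, -⟩, ⟨hf₀H, -, -⟩, ⟨hg₀H, -, -⟩⟩ := aux9_mem_T.mp ht₀T
    have hcard : (t₀.2.1 ×ˢ t₀.2.2).card = 9 := by
      rw [card_product, hUnif _ hf₀H, hUnif _ hg₀H]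
    calc (TB.filter fun t => ψ t = b).card ≤ (t₀.2.1 ×ˢ t₀.2.2).card := by
          apply card_le_card_of_injOn (fun t => (t.1.2.1, t.1.2.2))
          · intro t ht
            obtain ⟨htTB, hψt⟩ := mem_filter.mp ht
            obtain ⟨⟨-, -, -, -⟩, ⟨-, huf, -⟩, ⟨-, hwg, -⟩⟩ := aux9_mem_T.mp (mem_filter.mp htTB).1
            have hfg : t.2.1 = t₀.2.1 ∧ t.2.2 = t₀.2.2 := by
              have : ψ t = ψ t₀ := by rw [hψt, hψt₀]
              exact Prod.mk.injEq _ _ _ _ ▸ this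
            exact mem_product.mpr ⟨hfg.1 ▸ huf, hfg.2 ▸ hwg⟩
          · intro t ht t' ht' heq
            rw [Finset.mem_coe] at ht ht'
            obtain ⟨htTB, hψt⟩ := mem_filter.mp ht
            obtain ⟨ht'TB, hψt'⟩ := mem_filter.mp ht'
            obtain ⟨⟨heH, hue, hwe, huw⟩, ⟨hfH, huf, -⟩, ⟨hgH, hwg, -⟩⟩ :=
              aux9_mem_T.mp (mem_filter.mp htTB).1
            obtain ⟨⟨he'H, hue', hwe', -⟩, -, -⟩ := aux9_mem_T.mp (mem_filter.mp ht'TB).1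
            have huu : t.1.2.1 = t'.1.2.1 := congrArg Prod.fst heq
            have hww : t.1.2.2 = t'.1.2.2 := congrArg Prod.snd heq
            have hfg : t.2.1 = t'.2.1 ∧ t.2.2 = t'.2.2 := by
              have : ψ t = ψ t' := by rw [hψt, hψt']
              exact Prod.mk.injEq _ _ _ _ ▸ this
            have hee : t.1.1 = t'.1.1 := by
              by_contra hne
              have hcle := hLin _ heH _ he'H hne
              have h1 : t.1.2.1 ∈ t.1.1 ∩ t'.1.1 :=
                mem_inter.mpr ⟨hue, huu ▸ hue'⟩
              have h2 : t.1.2.2 ∈ t.1.1 ∩ t'.1.1 :=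
                mem_inter.mpr ⟨hwe, hww ▸ hwe'⟩
              exact huw (card_le_one.mp hcle _ h1 _ h2)
            have : t.1 = t'.1 := Prod.ext hee (Prod.ext huu hww)
            exact Prod.ext this (Prod.ext hfg.1 hfg.2)
      _ = 9 := hcard
  have h2 : (TB.image ψ) ⊆ (H ×ˢ H).filter fun p => (p.1 ∩ p.2).Nonempty := by
    intro p hp
    obtain ⟨t, ht, hψt⟩ := mem_image.mp hp
    obtain ⟨htT, hne⟩ := mem_filter.mp ht
    obtain ⟨-, ⟨hfH, -, -⟩, ⟨hgH, -, -⟩⟩ := aux9_mem_T.mp htT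
    subst hψt
    exact mem_filter.mpr ⟨mem_product.mpr ⟨hfH, hgH⟩, hne⟩
  have h3 : ((H ×ˢ H).filter fun p => (p.1 ∩ p.2).Nonempty).card
      ≤ ∑ v : V, (hyperDeg H v) ^ 2 := by
    calc ((H ×ˢ H).filter fun p => (p.1 ∩ p.2).Nonempty).card
        ≤ ∑ p ∈ (H ×ˢ H).filter (fun p => (p.1 ∩ p.2).Nonempty), (p.1 ∩ p.2).card := by
          rw [card_eq_sum_ones]
          apply sum_le_sum
          intro p hp
          exact card_pos.mpr (mem_filter.mp hp).2
      _ ≤ ∑ p ∈ H ×ˢ H, (p.1 ∩ p.2).card := by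
          apply sum_le_sum_of_subset_of_nonneg (filter_subset _ _)
          intro p _ _; exact Nat.zero_le _
      _ = ∑ v : V, (hyperDeg H v) ^ 2 := by
          rw [show (∑ p ∈ H ×ˢ H, (p.1 ∩ p.2).card) = ∑ f ∈ H, ∑ g ∈ H, (f ∩ g).card from
            sum_product' H H (fun f g => (f ∩ g).card)]
          have hfg : ∀ f g : Finset V, (f ∩ g).card = ∑ v : V, (if v ∈ f then 1 else 0) * (if v ∈ g then 1 else 0) := by
            intro f g
            have : f ∩ g = (univ : Finset V).filter fun v => v ∈ f ∧ v ∈ g := by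
              ext v; simp
            rw [this, card_filter]
            refine sum_congr rfl fun v _ => ?_
            by_cases h1 : v ∈ f <;> by_cases h2 : v ∈ g <;> simp [h1, h2]
          calc ∑ f ∈ H, ∑ g ∈ H, (f ∩ g).card
              = ∑ f ∈ H, ∑ g ∈ H, ∑ v : V, (if v ∈ f then 1 else 0) * (if v ∈ g then 1 else 0) := by
                exact sum_congr rfl fun f _ => sum_congr rfl fun g _ => hfg f g
            _ = ∑ f ∈ H, ∑ v : V, ∑ g ∈ H, (if v ∈ f then 1 else 0) * (if v ∈ g then 1 else 0) :=
                sum_congr rfl fun f _ => sum_comm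
            _ = ∑ v : V, ∑ f ∈ H, ∑ g ∈ H, (if v ∈ f then 1 else 0) * (if v ∈ g then 1 else 0) :=
                sum_comm
            _ = ∑ v : V, (hyperDeg H v) ^ 2 := by
                refine sum_congr rfl fun v _ => ?_
                rw [← sum_mul_sum]
                rw [hyperDeg, card_filter]
                ring
  calc TB.card ≤ 9 * (TB.image ψ).card := h1
    _ ≤ 9 * ∑ v : V, (hyperDeg H v) ^ 2 := by
        exact Nat.mul_le_mul_left 9 (le_trans (card_le_card h2) h3)


/-- convenient record of the facts about a good tuple -/
lemma aux9_good_facts {H : Finset (Finset V)} {t : (Finset V × V × V) × Finset V × Finset V}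
    (ht : t ∈ (aux9T H).filter fun t => ¬ (t.2.1 ∩ t.2.2).Nonempty) :
    (t.1.1 ∈ H ∧ t.1.2.1 ∈ t.1.1 ∧ t.1.2.2 ∈ t.1.1 ∧ t.1.2.1 ≠ t.1.2.2) ∧
    (t.2.1 ∈ H ∧ t.1.2.1 ∈ t.2.1 ∧ t.2.1 ≠ t.1.1) ∧
    (t.2.2 ∈ H ∧ t.1.2.2 ∈ t.2.2 ∧ t.2.2 ≠ t.1.1) ∧ (t.2.1 ∩ t.2.2 = ∅) := by
  obtain ⟨htT, hne⟩ := mem_filter.mp ht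
  obtain ⟨h1, h2, h3⟩ := aux9_mem_T.mp htT
  exact ⟨h1, h2, h3, not_nonempty_iff_eq_empty.mp hne⟩

lemma aux9_disj_aux {f g : Finset V} (h : f ∩ g = ∅) {x : V} (hx : x ∈ f) (hy : x ∈ g) : False := by
  have : x ∈ f ∩ g := mem_inter.mpr ⟨hx, hy⟩
  rw [h] at this
  exact notMem_empty _ this

/-- Good tuples are at most twice the number of 3-links. -/
lemma aux9_TG_le (H : Finset (Finset V)) (hLin : IsLinear H) :
    ((aux9T H).filter fun t => ¬ (t.2.1 ∩ t.2.2).Nonempty).card ≤ 2 * threeLinkCount H := by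
  classical
  set TG := (aux9T H).filter fun t => ¬ (t.2.1 ∩ t.2.2).Nonempty with hTGdef
  set φ : (Finset V × V × V) × Finset V × Finset V → Finset (Finset V) :=
    fun t => {t.2.1, t.1.1, t.2.2} with hφ
  have h1 : TG.card ≤ 2 * (TG.image φ).card := by
    apply card_le_mul_card_image
    intro b hb
    obtain ⟨t₀, ht₀, hφt₀⟩ := mem_image.mp hb
    obtain ⟨⟨he₀H, hu₀e, hw₀e, hu₀w₀⟩, ⟨hf₀H, hu₀f, hf₀e⟩, ⟨hg₀H, hw₀g, hg₀e⟩, hdisj₀⟩ :=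
      aux9_good_facts ht₀
    calc (TG.filter fun t => φ t = b).card ≤ ({t₀.2.1, t₀.2.2} : Finset (Finset V)).card := by
          apply card_le_card_of_injOn (fun t => t.2.1)
          · -- maps to {f₀, g₀}
            intro t ht
            obtain ⟨htTG, hφt⟩ := mem_filter.mp ht
            obtain ⟨⟨heH, hue, hwe, huw⟩, ⟨hfH, huf, hfe⟩, ⟨hgH, hwg, hge⟩, hdisj⟩ :=
              aux9_good_facts htTG
            have hs : ({t.2.1, t.1.1, t.2.2} : Finset (Finset V))
                = {t₀.2.1, t₀.1.1, t₀.2.2} := hφt.trans hφt₀.symm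
            have hfmem : t.2.1 ∈ ({t₀.2.1, t₀.1.1, t₀.2.2} : Finset (Finset V)) := by
              rw [← hs]; simp
            simp only [Finset.mem_coe, mem_insert, mem_singleton] at hfmem ⊢
            rcases hfmem with h | h | h
            · exact Or.inl h
            · -- t.2.1 = e₀ : impossible
              exfalso
              have hgmem : t.2.2 ∈ ({t₀.2.1, t₀.1.1, t₀.2.2} : Finset (Finset V)) := by
                rw [← hs]; simp
              have hgf : t.2.2 ≠ t.2.1 := by
                intro heq
                exact aux9_disj_aux hdisj (heq ▸ hwg) hwg
              simp only [mem_insert, mem_singleton] at hgmem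
              rcases hgmem with h' | h' | h'
              · -- g = f₀ : u₀ ∈ e₀ = f and u₀ ∈ f₀ = g
                exact aux9_disj_aux hdisj (h ▸ hu₀e) (h' ▸ hu₀f)
              · exact hgf (h' ▸ h ▸ rfl)
              · -- g = g₀ : w₀ ∈ e₀ = f and w₀ ∈ g₀ = g
                exact aux9_disj_aux hdisj (h ▸ hw₀e) (h' ▸ hw₀g)
            · exact Or.inr h
          · -- injective on the fiber
            intro t ht t' ht' heq
            rw [Finset.mem_coe] at ht ht'
            obtain ⟨htTG, hφt⟩ := mem_filter.mp ht
            obtain ⟨ht'TG, hφt'⟩ := mem_filter.mp ht'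
            obtain ⟨⟨heH, hue, hwe, huw⟩, ⟨hfH, huf, hfe⟩, ⟨hgH, hwg, hge⟩, hdisj⟩ :=
              aux9_good_facts htTG
            obtain ⟨⟨he'H, hue', hwe', hu'w'⟩, ⟨hf'H, huf', hf'e⟩, ⟨hg'H, hwg', hg'e⟩, hdisj'⟩ :=
              aux9_good_facts ht'TG
            -- f = f'
            have hff : t.2.1 = t'.2.1 := heq
            have hs : ({t'.2.1, t'.1.1, t'.2.2} : Finset (Finset V))
                = {t.2.1, t.1.1, t.2.2} := hφt'.trans hφt.symm
            -- step (a): g' = g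
            have hgg : t'.2.2 = t.2.2 := by
              have hmem : t'.2.2 ∈ ({t.2.1, t.1.1, t.2.2} : Finset (Finset V)) := by
                rw [← hs]; simp
              simp only [mem_insert, mem_singleton] at hmem
              rcases hmem with h | h | h
              · exfalso
                exact aux9_disj_aux hdisj' (hff ▸ h ▸ hwg') hwg'
              · exfalso
                -- g' = e : u ∈ e = g' and u ∈ f = f'
                exact aux9_disj_aux hdisj' (hff ▸ huf) (h ▸ hue)
              · exact h
            -- step (b): e' = e
            have hee : t'.1.1 = t.1.1 := by
              have hmem : t'.1.1 ∈ ({t.2.1, t.1.1, t.2.2} : Finset (Finset V)) := by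
                rw [← hs]; simp
              simp only [mem_insert, mem_singleton] at hmem
              rcases hmem with h | h | h
              · exfalso
                -- e' = f : w' ∈ e' and w' ∈ g' = g ; f ∩ g = ∅
                exact aux9_disj_aux hdisj (h ▸ hwe') (hgg ▸ hwg')
              · exact h
              · exfalso
                -- e' = g : u' ∈ e' = g and u' ∈ f' = f
                exact aux9_disj_aux hdisj (hff ▸ huf') (h ▸ hue')
            -- step (c): u' = u
            have hef : t.1.1 ≠ t.2.1 := fun h => hfe h.symm
            have huu : t.1.2.1 = t'.1.2.1 := by
              have hc := hLin _ heH _ hfH hef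
              exact card_le_one.mp hc _ (mem_inter.mpr ⟨hue, huf⟩) _
                (mem_inter.mpr ⟨hee ▸ hue', hff ▸ huf'⟩)
            -- step (d): w' = w
            have heg : t.1.1 ≠ t.2.2 := by
              intro h
              exact aux9_disj_aux hdisj huf (h ▸ hue)
            have hww : t.1.2.2 = t'.1.2.2 := by
              have hc := hLin _ heH _ hgH heg
              exact card_le_one.mp hc _ (mem_inter.mpr ⟨hwe, hwg⟩) _
                (mem_inter.mpr ⟨hee ▸ hwe', hgg ▸ hwg'⟩)
            have h1 : t.1 = t'.1 := Prod.ext hee.symm (Prod.ext huu hww)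
            exact Prod.ext h1 (Prod.ext hff hgg.symm)
      _ ≤ 2 := le_trans (card_insert_le _ _) (by simp)
  have h2 : (TG.image φ).card ≤ threeLinkCount H := by
    unfold threeLinkCount
    rw [Finset.filter_congr_decidable]
    apply card_le_card
    intro s hs
    obtain ⟨t, ht, hφt⟩ := mem_image.mp hs
    obtain ⟨⟨heH, hue, hwe, huw⟩, ⟨hfH, huf, hfe⟩, ⟨hgH, hwg, hge⟩, hdisj⟩ := aux9_good_facts ht
    have hfg : t.2.1 ≠ t.2.2 := by
      intro h
      exact aux9_disj_aux hdisj (h ▸ hwg) hwg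
    have hcard3 : ({t.2.1, t.1.1, t.2.2} : Finset (Finset V)).card = 3 := by
      rw [card_insert_of_notMem, card_insert_of_notMem, card_singleton]
      · simp only [mem_singleton]
        exact fun h => hge h.symm
      · simp only [mem_insert, mem_singleton]
        push_neg
        exact ⟨hfe, hfg⟩
    have hsub : s ⊆ H := by
      rw [← hφt]
      intro x hx
      simp only [φ, mem_insert, mem_singleton] at hx
      rcases hx with h | h | h <;> subst h <;> assumption
    rw [mem_filter, mem_powersetCard]
    exact ⟨⟨hsub, by rw [← hφt]; exact hcard3⟩,
      t.2.1, t.1.1, t.2.2, hφt.symm, ⟨t.1.2.1, mem_inter.mpr ⟨huf, hue⟩⟩,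
      ⟨t.1.2.2, mem_inter.mpr ⟨hwe, hwg⟩⟩, hdisj⟩
  calc TG.card ≤ 2 * (TG.image φ).card := h1
    _ ≤ 2 * threeLinkCount H := Nat.mul_le_mul_left 2 h2



end Aux9

set_option maxHeartbeats 1000000 in
theorem stmt_9 {V : Type*} [Fintype V] [DecidableEq V]
    (H : Finset (Finset V))
    (hUnif : ∀ e ∈ H, e.card = 3)
    (hLin : IsLinear H)
    (hNoC5 : ¬ HasBergeCycle H 5)
    (n : ℕ) (hn : n = Fintype.card V)
    (d : ℝ) (hd : d = 3 * H.card / n)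
    (hmax : ∀ v : V, (hyperDeg H v : ℝ) ≤ 6 * d) :
    (threeLinkCount H : ℝ) ≥ n * d ^ 3 - 144 * n * d ^ 2 := by
  rcases le_or_gt d 144 with hd144 | hd144
  · -- trivial case: RHS ≤ 0
    have h1 : (0:ℝ) ≤ (threeLinkCount H : ℝ) := Nat.cast_nonneg _
    have h2 : (0:ℝ) ≤ (n:ℝ) := Nat.cast_nonneg _
    nlinarith [sq_nonneg d, mul_nonneg h2 (sq_nonneg d)]
  · -- main case
    set a : V → ℝ := fun v => (hyperDeg H v : ℝ) with ha_def
    have ha0 : ∀ v, 0 ≤ a v := fun v => Nat.cast_nonneg _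
    have hdpos : (0:ℝ) < d := lt_trans (by norm_num) hd144
    have hn0 : (0:ℝ) < (n:ℝ) := by
      rcases eq_or_lt_of_le (Nat.cast_nonneg n : (0:ℝ) ≤ n) with h | h
      · exfalso; rw [hd, ← h, div_zero] at hd144; linarith
      · exact h
    have hnd : (n:ℝ) * d = 3 * H.card := by
      rw [hd]; field_simp
    -- degree sum
    have hdeg_nat : ∑ v : V, hyperDeg H v = 3 * H.card := by
      have h1 : ∑ e ∈ H, ∑ u ∈ e, (1:ℕ) = ∑ u : V, ∑ e ∈ H.filter (u ∈ ·), (1:ℕ) :=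
        aux9_sum_H_mem H (fun _ _ => 1)
      have h2 : ∑ e ∈ H, ∑ u ∈ e, (1:ℕ) = 3 * H.card := by
        rw [Finset.sum_congr rfl fun e he => by
          rw [Finset.sum_const, smul_eq_mul, mul_one, hUnif e he]]
        rw [Finset.sum_const, smul_eq_mul, mul_comm]
      have h3 : ∑ u : V, ∑ e ∈ H.filter (u ∈ ·), (1:ℕ) = ∑ v : V, hyperDeg H v := by
        refine Finset.sum_congr rfl fun u _ => ?_
        rw [Finset.sum_const, smul_eq_mul, mul_one, hyperDeg]
      rw [← h3, ← h1, h2]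
    have hA : ∑ v : V, a v = (n:ℝ) * d := by
      rw [hnd]
      simp only [ha_def]
      exact_mod_cast hdeg_nat
    have hApos : (0:ℝ) < ∑ v : V, a v := by rw [hA]; positivity
    -- Q
    set Q : ℝ := ∑ v : V, (a v) ^ 2 with hQ_def
    have hQ : Q ≤ 6 * (n:ℝ) * d ^ 2 := by
      have h1 : Q ≤ ∑ v : V, 6 * d * a v := by
        apply Finset.sum_le_sum
        intro v _
        have := hmax v
        nlinarith [ha0 v]
      rw [← Finset.mul_sum, hA] at h1
      nlinarith
    have hQ0 : 0 ≤ Q := Finset.sum_nonneg fun v _ => sq_nonneg _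
    -- second-neighborhood sums
    set Pv : V → Finset ((_ : Finset V) × V) :=
      fun v => (H.filter (fun e => v ∈ e)).sigma (fun e => e.erase v) with hPv_def
    set sv : V → ℝ := fun v => ∑ y ∈ Pv v, a y.2 with hsv_def
    set tv : V → ℝ := fun v => ∑ y ∈ Pv v, (a y.2)⁻¹ with htv_def
    have hmemPv : ∀ v, ∀ y ∈ Pv v, y.1 ∈ H ∧ v ∈ y.1 ∧ y.2 ∈ y.1.erase v := by
      intro v y hy
      have h := Finset.mem_sigma.mp hy
      exact ⟨(Finset.mem_filter.mp h.1).1, (Finset.mem_filter.mp h.1).2, h.2⟩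
    have haw1 : ∀ v, ∀ y ∈ Pv v, 1 ≤ a y.2 := by
      intro v y hy
      obtain ⟨h1, h2, h3⟩ := hmemPv v y hy
      have h4 : 1 ≤ hyperDeg H y.2 := aux9_deg_pos h1 (Finset.mem_of_mem_erase h3)
      show (1:ℝ) ≤ (hyperDeg H y.2 : ℝ)
      exact_mod_cast h4
    have hcardPv : ∀ v, ((Pv v).card : ℝ) = 2 * a v := by
      intro v
      have h1 : (Pv v).card = ∑ e ∈ H.filter (fun e => v ∈ e), (e.erase v).card :=
        Finset.card_sigma _ _
      have h2 : ∀ e ∈ H.filter (fun e => v ∈ e), (e.erase v).card = 2 := by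
        intro e he
        obtain ⟨heH, hve⟩ := Finset.mem_filter.mp he
        rw [Finset.card_erase_of_mem hve, hUnif e heH]
      rw [h1, Finset.sum_const_nat h2,
        show (H.filter fun e => v ∈ e).card = hyperDeg H v from rfl]
      push_cast
      ring
    have hcs : ∀ v, (2 * a v) ^ 2 ≤ sv v * tv v := by
      intro v
      have h1 : ∑ y ∈ Pv v, Real.sqrt (a y.2) * (Real.sqrt (a y.2))⁻¹ = 2 * a v := by
        have hh : ∀ y ∈ Pv v, Real.sqrt (a y.2) * (Real.sqrt (a y.2))⁻¹ = 1 := by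
          intro y hy
          have h2 : (0:ℝ) < a y.2 := lt_of_lt_of_le one_pos (haw1 v y hy)
          rw [mul_inv_cancel₀ (ne_of_gt (Real.sqrt_pos.mpr h2))]
        rw [Finset.sum_congr rfl hh, Finset.sum_const, nsmul_eq_mul, mul_one, hcardPv v]
      have h3 : ∑ y ∈ Pv v, (Real.sqrt (a y.2)) ^ 2 = sv v :=
        Finset.sum_congr rfl fun y _ => Real.sq_sqrt (ha0 _)
      have h4 : ∑ y ∈ Pv v, ((Real.sqrt (a y.2))⁻¹) ^ 2 = tv v := by
        refine Finset.sum_congr rfl fun y _ => ?_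
        rw [inv_pow, Real.sq_sqrt (ha0 _)]
      calc (2 * a v) ^ 2 = (∑ y ∈ Pv v, Real.sqrt (a y.2) * (Real.sqrt (a y.2))⁻¹) ^ 2 := by
            rw [h1]
        _ ≤ (∑ y ∈ Pv v, (Real.sqrt (a y.2)) ^ 2) * (∑ y ∈ Pv v, ((Real.sqrt (a y.2))⁻¹) ^ 2) :=
            Finset.sum_mul_sq_le_sq_mul_sq _ _ _
        _ = sv v * tv v := by rw [h3, h4]
    have htv0 : ∀ v, 0 ≤ tv v := fun v => Finset.sum_nonneg fun y _ => inv_nonneg.mpr (ha0 _)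
    have hsv0 : ∀ v, 0 ≤ sv v := fun v => Finset.sum_nonneg fun y _ => ha0 _
    have hdeginv : ∀ w : V, a w * (a w)⁻¹ ≤ 1 := by
      intro w
      rcases eq_or_ne (a w) 0 with h | h
      · rw [h]; simp
      · rw [mul_inv_cancel₀ h]
    have hts : ∑ v : V, tv v ≤ 2 * (n:ℝ) := by
      calc ∑ v : V, tv v
          = ∑ v : V, ∑ e ∈ H.filter (fun e => v ∈ e), ∑ w ∈ e.erase v, (a w)⁻¹ :=
            Finset.sum_congr rfl fun v _ => Finset.sum_sigma _ _ _
        _ = ∑ e ∈ H, ∑ v ∈ e, ∑ w ∈ e.erase v, (a w)⁻¹ :=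
            (aux9_sum_H_mem H (fun e v => ∑ w ∈ e.erase v, (a w)⁻¹)).symm
        _ = ∑ e ∈ H, ∑ w ∈ e, ∑ v ∈ e.erase w, (a w)⁻¹ :=
            Finset.sum_congr rfl fun e _ => aux9_sum_erase_swap e (fun v w => (a w)⁻¹)
        _ = ∑ e ∈ H, ∑ w ∈ e, 2 * (a w)⁻¹ := by
            refine Finset.sum_congr rfl fun e he => Finset.sum_congr rfl fun w hw => ?_
            rw [Finset.sum_const, Finset.card_erase_of_mem hw, hUnif e he, nsmul_eq_mul]
            norm_num
        _ = ∑ w : V, ∑ e ∈ H.filter (fun e => w ∈ e), 2 * (a w)⁻¹ :=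
            aux9_sum_H_mem H (fun e w => 2 * (a w)⁻¹)
        _ = ∑ w : V, 2 * (a w * (a w)⁻¹) := by
            refine Finset.sum_congr rfl fun w _ => ?_
            rw [Finset.sum_const, nsmul_eq_mul]
            rw [show (H.filter fun e => w ∈ e).card = hyperDeg H w from rfl]
            show (hyperDeg H w : ℝ) * (2 * (a w)⁻¹) = 2 * (a w * (a w)⁻¹)
            ring
        _ ≤ ∑ _w : V, 2 * (1:ℝ) := Finset.sum_le_sum fun w _ => by
            have := hdeginv w
            nlinarith
        _ = 2 * (n:ℝ) := by
            rw [Finset.sum_const, Finset.card_univ, ← hn, nsmul_eq_mul]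
            ring
    -- positive-degree vertices
    set Vp : Finset V := Finset.univ.filter (fun v => 0 < hyperDeg H v) with hVp_def
    have hHne : H.Nonempty := by
      by_contra hne
      rw [Finset.not_nonempty_iff_eq_empty] at hne
      rw [hne] at hnd
      simp only [Finset.card_empty, Nat.cast_zero, mul_zero] at hnd
      nlinarith
    obtain ⟨e₀, he₀⟩ := hHne
    have he₀ne : e₀.Nonempty := by
      rw [← Finset.card_pos, hUnif e₀ he₀]; norm_num
    obtain ⟨v₀, hv₀⟩ := he₀ne
    have hv₀p : v₀ ∈ Vp := Finset.mem_filter.mpr ⟨Finset.mem_univ _, aux9_deg_pos he₀ hv₀⟩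
    have hdeg0 : ∀ v, v ∉ Vp → a v = 0 ∧ Pv v = ∅ := by
      intro v hv
      have h1 : hyperDeg H v = 0 := by
        by_contra h2
        exact hv (Finset.mem_filter.mpr ⟨Finset.mem_univ _, Nat.pos_of_ne_zero h2⟩)
      constructor
      · show ((hyperDeg H v : ℕ) : ℝ) = 0
        rw [h1]; norm_num
      · have h3 : H.filter (fun e => v ∈ e) = ∅ := Finset.card_eq_zero.mp h1
        show (H.filter (fun e => v ∈ e)).sigma (fun e => e.erase v) = ∅
        rw [h3]
        rfl
    have htvpos : ∀ v ∈ Vp, 0 < tv v := by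
      intro v hv
      have h1 : 0 < hyperDeg H v := (Finset.mem_filter.mp hv).2
      obtain ⟨e, he⟩ := Finset.card_pos.mp h1
      obtain ⟨heH, hve⟩ := Finset.mem_filter.mp he
      have h2 : (e.erase v).Nonempty := by
        rw [← Finset.card_pos, Finset.card_erase_of_mem hve, hUnif e heH]
        norm_num
      obtain ⟨w, hw⟩ := h2
      have hy : (⟨e, w⟩ : (_ : Finset V) × V) ∈ Pv v :=
        Finset.mem_sigma.mpr ⟨Finset.mem_filter.mpr ⟨heH, hve⟩, hw⟩
      refine Finset.sum_pos' (fun y _ => inv_nonneg.mpr (ha0 _)) ⟨⟨e, w⟩, hy, ?_⟩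
      have := haw1 v ⟨e, w⟩ hy
      exact inv_pos.mpr (by linarith)
    -- the weights x = a * sqrt a
    set xB : V → ℝ := fun v => a v * Real.sqrt (a v) with hxB_def
    have hxB0 : ∀ v, 0 ≤ xB v := fun v => mul_nonneg (ha0 v) (Real.sqrt_nonneg _)
    have hxBsq : ∀ v, (xB v) ^ 2 = (a v) ^ 3 := by
      intro v
      show (a v * Real.sqrt (a v)) ^ 2 = (a v) ^ 3
      rw [mul_pow, Real.sq_sqrt (ha0 v)]
      ring
    set B : ℝ := ∑ v : V, xB v with hB_def
    set C : ℝ := ∑ v : V, Real.sqrt (a v) with hC_def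
    have hB0 : 0 ≤ B := Finset.sum_nonneg fun v _ => hxB0 v
    have hC0 : 0 ≤ C := Finset.sum_nonneg fun v _ => Real.sqrt_nonneg _
    have hCSa : (∑ v : V, a v) ^ 2 ≤ B * C := by
      have h1 : ∀ v : V, Real.sqrt (xB v) * Real.sqrt (Real.sqrt (a v)) = a v := by
        intro v
        rw [← Real.sqrt_mul (hxB0 v)]
        have h2 : xB v * Real.sqrt (a v) = a v * a v := by
          show a v * Real.sqrt (a v) * Real.sqrt (a v) = a v * a v
          rw [mul_assoc, Real.mul_self_sqrt (ha0 v)]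
        rw [h2, Real.sqrt_mul_self (ha0 v)]
      calc (∑ v : V, a v) ^ 2
          = (∑ v : V, Real.sqrt (xB v) * Real.sqrt (Real.sqrt (a v))) ^ 2 := by
            rw [Finset.sum_congr rfl fun v _ => h1 v]
        _ ≤ (∑ v : V, Real.sqrt (xB v) ^ 2) * (∑ v : V, Real.sqrt (Real.sqrt (a v)) ^ 2) :=
            Finset.sum_mul_sq_le_sq_mul_sq _ _ _
        _ = B * C := by
            rw [Finset.sum_congr rfl fun v _ => Real.sq_sqrt (hxB0 v),
              Finset.sum_congr rfl fun v _ => Real.sq_sqrt (Real.sqrt_nonneg (a v))]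
    have hCSb : C ^ 2 ≤ (n:ℝ) * (∑ v : V, a v) := by
      calc C ^ 2 = (∑ v : V, Real.sqrt (a v) * 1) ^ 2 := by simp [hC_def]
        _ ≤ (∑ v : V, Real.sqrt (a v) ^ 2) * (∑ _v : V, (1:ℝ) ^ 2) :=
            Finset.sum_mul_sq_le_sq_mul_sq _ _ _
        _ = (∑ v : V, a v) * (n:ℝ) := by
            rw [Finset.sum_congr rfl fun v _ => Real.sq_sqrt (ha0 v)]
            simp [Finset.card_univ, ← hn]
        _ = (n:ℝ) * (∑ v : V, a v) := mul_comm _ _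
    have hAB : (∑ v : V, a v) ^ 3 ≤ (n:ℝ) * B ^ 2 := by
      have h1 : (∑ v : V, a v) ^ 2 * (∑ v : V, a v) ^ 2 ≤ (B * C) * (B * C) :=
        mul_self_le_mul_self (sq_nonneg _) hCSa
      have h3 : B ^ 2 * C ^ 2 ≤ B ^ 2 * ((n:ℝ) * (∑ v : V, a v)) :=
        mul_le_mul_of_nonneg_left hCSb (sq_nonneg B)
      have h4 : (∑ v : V, a v) ^ 3 * (∑ v : V, a v) ≤ ((n:ℝ) * B ^ 2) * (∑ v : V, a v) := by
        nlinarith [h1, h3]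
      exact le_of_mul_le_mul_right h4 hApos
    -- Engel form
    have hsum_tVp_le : ∑ v ∈ Vp, tv v ≤ 2 * (n:ℝ) :=
      le_trans (Finset.sum_le_sum_of_subset_of_nonneg (Finset.filter_subset _ _)
        (fun v _ _ => htv0 v)) hts
    have hsum_tVp_pos : 0 < ∑ v ∈ Vp, tv v :=
      Finset.sum_pos' (fun v _ => htv0 v) ⟨v₀, hv₀p, htvpos v₀ hv₀p⟩
    have hBVp : ∑ v ∈ Vp, xB v = B := by
      apply Finset.sum_subset (Finset.filter_subset _ _)
      intro v _ hv
      show a v * Real.sqrt (a v) = 0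
      rw [(hdeg0 v hv).1]
      simp
    have hEngel : (∑ v ∈ Vp, xB v) ^ 2 / (∑ v ∈ Vp, tv v) ≤ ∑ v ∈ Vp, (xB v) ^ 2 / tv v :=
      Finset.sq_sum_div_le_sum_sq_div _ _ (fun v hv => htvpos v hv)
    set N1 : ℝ := ∑ v : V, a v * sv v with hN1_def
    have hN1 : 2 * (n:ℝ) * d ^ 3 ≤ N1 := by
      have hstep1 : ∑ v ∈ Vp, 4 * (a v) ^ 3 / tv v ≤ ∑ v ∈ Vp, a v * sv v := by
        refine Finset.sum_le_sum fun v hv => ?_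
        have h5 := hcs v
        have h6 := htvpos v hv
        rw [div_le_iff₀ h6]
        calc 4 * (a v) ^ 3 = a v * ((2 * a v) ^ 2) := by ring
          _ ≤ a v * (sv v * tv v) := mul_le_mul_of_nonneg_left h5 (ha0 v)
          _ = a v * sv v * tv v := by ring
      have hstep2 : ∑ v ∈ Vp, a v * sv v ≤ N1 :=
        Finset.sum_le_sum_of_subset_of_nonneg (Finset.filter_subset _ _)
          (fun v _ _ => mul_nonneg (ha0 v) (hsv0 v))
      have hstep3 : ∑ v ∈ Vp, 4 * (a v) ^ 3 / tv v = 4 * ∑ v ∈ Vp, (xB v) ^ 2 / tv v := by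
        rw [Finset.mul_sum]
        refine Finset.sum_congr rfl fun v _ => ?_
        rw [hxBsq v]
        ring
      have hstep4 : 4 * (B ^ 2 / (2 * (n:ℝ))) ≤ 4 * ((∑ v ∈ Vp, xB v) ^ 2 / (∑ v ∈ Vp, tv v)) := by
        rw [hBVp]
        have := div_le_div_of_nonneg_left (sq_nonneg B) hsum_tVp_pos hsum_tVp_le
        linarith
      have h6 : ((n:ℝ) * d) ^ 3 ≤ (n:ℝ) * B ^ 2 := hA ▸ hAB
      have h7 : (n:ℝ) * ((n:ℝ) ^ 2 * d ^ 3) ≤ (n:ℝ) * B ^ 2 := by nlinarith [h6]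
      have h8 : (n:ℝ) ^ 2 * d ^ 3 ≤ B ^ 2 := le_of_mul_le_mul_left h7 hn0
      have h9 : 2 * (n:ℝ) * d ^ 3 ≤ 4 * (B ^ 2 / (2 * (n:ℝ))) := by
        rw [show 4 * (B ^ 2 / (2 * (n:ℝ))) = 2 * B ^ 2 / n by field_simp; ring]
        rw [le_div_iff₀ hn0]
        nlinarith [h8]
      calc 2 * (n:ℝ) * d ^ 3 ≤ 4 * (B ^ 2 / (2 * (n:ℝ))) := h9
        _ ≤ 4 * ((∑ v ∈ Vp, xB v) ^ 2 / (∑ v ∈ Vp, tv v)) := hstep4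
        _ ≤ 4 * ∑ v ∈ Vp, (xB v) ^ 2 / tv v := by linarith [hEngel]
        _ = ∑ v ∈ Vp, 4 * (a v) ^ 3 / tv v := hstep3.symm
        _ ≤ ∑ v ∈ Vp, a v * sv v := hstep1
        _ ≤ N1 := hstep2
    -- express the tuple count
    have hmemEUW : ∀ x ∈ aux9EUW H, x.1 ∈ H ∧ x.2.1 ∈ x.1 ∧ x.2.2 ∈ x.1 := by
      intro x hx
      obtain ⟨h1, h2⟩ := Finset.mem_filter.mp hx
      exact ⟨(Finset.mem_product.mp h1).1, h2.1, h2.2.1⟩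
    have hcardT_real : (((aux9T H).card : ℕ) : ℝ)
        = ∑ x ∈ aux9EUW H, (a x.2.1 - 1) * (a x.2.2 - 1) := by
      rw [aux9_card_T]
      push_cast
      refine Finset.sum_congr rfl fun x hx => ?_
      obtain ⟨heH, hue, hwe⟩ := hmemEUW x hx
      rw [aux9_card_F_real heH hue, aux9_card_F_real heH hwe]
    have hsv_alt : ∀ u : V, sv u = ∑ e ∈ H.filter (fun e => u ∈ e), ∑ w ∈ e.erase u, a w :=
      fun u => Finset.sum_sigma _ _ _
    have hEUW1 : ∑ x ∈ aux9EUW H, a x.2.1 * a x.2.2 = N1 := by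
      calc ∑ x ∈ aux9EUW H, a x.2.1 * a x.2.2
          = ∑ e ∈ H, ∑ u ∈ e, ∑ w ∈ e.erase u, a u * a w :=
            aux9_sum_EUW H (fun _ u w => a u * a w)
        _ = ∑ e ∈ H, ∑ u ∈ e, a u * ∑ w ∈ e.erase u, a w := by
            refine Finset.sum_congr rfl fun e _ => Finset.sum_congr rfl fun u _ => ?_
            rw [Finset.mul_sum]
        _ = ∑ u : V, ∑ e ∈ H.filter (u ∈ ·), a u * ∑ w ∈ e.erase u, a w :=
            aux9_sum_H_mem H (fun e u => a u * ∑ w ∈ e.erase u, a w)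
        _ = ∑ u : V, a u * sv u := by
            refine Finset.sum_congr rfl fun u _ => ?_
            rw [← Finset.mul_sum, hsv_alt u]
    have hedge_a : ∀ b : V → ℝ, ∑ e ∈ H, ∑ u ∈ e, b u = ∑ u : V, (a u) * b u := by
      intro b
      rw [aux9_sum_H_mem H (fun _ u => b u)]
      refine Finset.sum_congr rfl fun u _ => ?_
      rw [Finset.sum_const, nsmul_eq_mul]
      rfl
    have hEUW2 : ∑ x ∈ aux9EUW H, a x.2.1 = 2 * Q := by
      calc ∑ x ∈ aux9EUW H, a x.2.1
          = ∑ e ∈ H, ∑ u ∈ e, ∑ w ∈ e.erase u, a u := aux9_sum_EUW H (fun _ u _ => a u)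
        _ = ∑ e ∈ H, ∑ u ∈ e, 2 * a u := by
            refine Finset.sum_congr rfl fun e he => Finset.sum_congr rfl fun u hu => ?_
            rw [Finset.sum_const, Finset.card_erase_of_mem hu, hUnif e he, nsmul_eq_mul]
            norm_num
        _ = ∑ u : V, a u * (2 * a u) := hedge_a (fun u => 2 * a u)
        _ = 2 * Q := by
            rw [hQ_def, Finset.mul_sum]
            exact Finset.sum_congr rfl fun u _ => by ring
    have hEUW3 : ∑ x ∈ aux9EUW H, a x.2.2 = 2 * Q := by
      calc ∑ x ∈ aux9EUW H, a x.2.2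
          = ∑ e ∈ H, ∑ u ∈ e, ∑ w ∈ e.erase u, a w := aux9_sum_EUW H (fun _ _ w => a w)
        _ = ∑ e ∈ H, ∑ w ∈ e, ∑ u ∈ e.erase w, a w :=
            Finset.sum_congr rfl fun e _ => aux9_sum_erase_swap e (fun _ w => a w)
        _ = ∑ e ∈ H, ∑ w ∈ e, 2 * a w := by
            refine Finset.sum_congr rfl fun e he => Finset.sum_congr rfl fun w hw => ?_
            rw [Finset.sum_const, Finset.card_erase_of_mem hw, hUnif e he, nsmul_eq_mul]
            norm_num
        _ = ∑ w : V, a w * (2 * a w) := hedge_a (fun w => 2 * a w)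
        _ = 2 * Q := by
            rw [hQ_def, Finset.mul_sum]
            exact Finset.sum_congr rfl fun u _ => by ring
    have hcardT_ge : 2 * (n:ℝ) * d ^ 3 - 24 * (n:ℝ) * d ^ 2 ≤ (((aux9T H).card : ℕ) : ℝ) := by
      rw [hcardT_real]
      have hexp : ∑ x ∈ aux9EUW H, (a x.2.1 * a x.2.2 - a x.2.1 - a x.2.2)
          = N1 - 2 * Q - 2 * Q := by
        rw [Finset.sum_sub_distrib, Finset.sum_sub_distrib, hEUW1, hEUW2, hEUW3]
      have hpt : ∑ x ∈ aux9EUW H, (a x.2.1 * a x.2.2 - a x.2.1 - a x.2.2)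
          ≤ ∑ x ∈ aux9EUW H, (a x.2.1 - 1) * (a x.2.2 - 1) := by
        refine Finset.sum_le_sum fun x _ => ?_
        have : (a x.2.1 - 1) * (a x.2.2 - 1)
            = a x.2.1 * a x.2.2 - a x.2.1 - a x.2.2 + 1 := by ring
        linarith
      rw [hexp] at hpt
      linarith [hN1, hQ]
    -- final assembly
    have hsplit := Finset.card_filter_add_card_filter_not
      (s := aux9T H) (fun t => (t.2.1 ∩ t.2.2).Nonempty)
    have hTB := aux9_TB_le H hUnif hLin
    have hTG := aux9_TG_le H hLin
    have hQcast : ((∑ v : V, (hyperDeg H v) ^ 2 : ℕ) : ℝ) = Q := by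
      rw [hQ_def]
      push_cast
      rfl
    have hTBr : ((((aux9T H).filter fun t => (t.2.1 ∩ t.2.2).Nonempty).card : ℕ) : ℝ)
        ≤ 54 * (n:ℝ) * d ^ 2 := by
      have h1 : ((((aux9T H).filter fun t => (t.2.1 ∩ t.2.2).Nonempty).card : ℕ) : ℝ)
          ≤ 9 * Q := by
        rw [← hQcast]
        exact_mod_cast hTB
      nlinarith [hQ]
    have hTGr : 2 * (n:ℝ) * d ^ 3 - 78 * (n:ℝ) * d ^ 2
        ≤ ((((aux9T H).filter fun t => ¬ (t.2.1 ∩ t.2.2).Nonempty).card : ℕ) : ℝ) := by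
      have hcast : ((((aux9T H).filter fun t => (t.2.1 ∩ t.2.2).Nonempty).card : ℕ) : ℝ)
          + ((((aux9T H).filter fun t => ¬ (t.2.1 ∩ t.2.2).Nonempty).card : ℕ) : ℝ)
          = (((aux9T H).card : ℕ) : ℝ) := by exact_mod_cast congrArg Nat.cast hsplit
      linarith [hcardT_ge, hTBr]
    have hTGtlc : ((((aux9T H).filter fun t => ¬ (t.2.1 ∩ t.2.2).Nonempty).card : ℕ) : ℝ)
        ≤ 2 * (threeLinkCount H : ℝ) := by exact_mod_cast hTG
    have hnd2 : 0 ≤ (n:ℝ) * d ^ 2 := by positivity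
    rw [ge_iff_le]
    nlinarith [hTGr, hTGtlc, hnd2, hdpos]
end

section
/- Let G be a bipartite graph on z vertices with girth at least 2k (for k ≥ 2), with parts L = {l_1,...,l_{z₁}} and R = {r_1,...,r_{z₂}}. For an integer q ≥ 1, construct the 3-uniform hypergraph H with vertex set the disjoint union of copies L_t = {l^t_1,...,l^t_{z₁}}, R_t = {r^t_1,...,r^t_{z₂}} for 1 ≤ t ≤ q together with B = {v_{i,j} : l_i r_j ∈ E(G)}, and hyperedges {v_{i,j}, l^t_i, r^t_j} for all l_i r_j ∈ E(G) and 1 ≤ t ≤ q. Then H is linear and contains no linear cycle of odd length 2k'+1 for any 1 ≤ k' ≤ k. -/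
open Finset

/-- A linear cycle of length `m`: distinct vertices `v i` and distinct hyperedges `h i`
with `h i ∩ h (i+1) = {v (i+1)}` cyclically and non-consecutive hyperedges disjoint. -/
def HasLinearCycle {V : Type*} [DecidableEq V] (H : Finset (Finset V)) (m : ℕ) : Prop :=
  ∃ (v : ZMod m → V) (h : ZMod m → Finset V),
    Function.Injective v ∧ Function.Injective h ∧
    (∀ i, h i ∈ H) ∧
    (∀ i, h i ∩ h (i + 1) = {v (i + 1)}) ∧
    (∀ i j, j ≠ i → j ≠ i + 1 → i ≠ j + 1 → h i ∩ h j = ∅)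


section AuxHG
variable {α β : Type*} [DecidableEq α] [DecidableEq β] {q : ℕ} {G : SimpleGraph (α ⊕ β)}
  [DecidableRel G.Adj]

private def hedge (tp : Fin q × {p : α × β // G.Adj (Sum.inl p.1) (Sum.inr p.2)}) :
    Finset ((Fin q × α) ⊕ ((Fin q × β) ⊕ {p : α × β // G.Adj (Sum.inl p.1) (Sum.inr p.2)})) :=
  {Sum.inr (Sum.inr tp.2), Sum.inl (tp.1, tp.2.val.1), Sum.inr (Sum.inl (tp.1, tp.2.val.2))}

private lemma mem_hedge {tp} {x : (Fin q × α) ⊕ ((Fin q × β) ⊕ {p : α × β // G.Adj (Sum.inl p.1) (Sum.inr p.2)})} :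
    x ∈ hedge tp ↔ x = Sum.inr (Sum.inr tp.2) ∨ x = Sum.inl (tp.1, tp.2.val.1) ∨
      x = Sum.inr (Sum.inl (tp.1, tp.2.val.2)) := by
  simp [hedge]

private lemma hedge_shared {tp tp'}
    {a b : (Fin q × α) ⊕ ((Fin q × β) ⊕ {p : α × β // G.Adj (Sum.inl p.1) (Sum.inr p.2)})}
    (ha : a ∈ hedge tp) (ha' : a ∈ hedge tp') (hb : b ∈ hedge tp) (hb' : b ∈ hedge tp')
    (hab : a ≠ b) : tp = tp' := by
  have key : ∀ x, x ∈ hedge tp → x ∈ hedge (G := G) tp' →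
      (x = Sum.inr (Sum.inr tp.2) ∧ tp.2 = tp'.2) ∨
      (x = Sum.inl (tp.1, tp.2.val.1) ∧ tp.1 = tp'.1 ∧ tp.2.val.1 = tp'.2.val.1) ∨
      (x = Sum.inr (Sum.inl (tp.1, tp.2.val.2)) ∧ tp.1 = tp'.1 ∧ tp.2.val.2 = tp'.2.val.2) := by
    intro x hx hx'
    rw [mem_hedge] at hx hx'
    rcases hx with h1 | h1 | h1 <;> subst h1
    · rcases hx' with h2 | h2 | h2
      · left
        refine ⟨rfl, ?_⟩
        injection h2 with h2; injection h2 with h2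
      · exact absurd h2 (by simp)
      · exact absurd h2 (by simp)
    · rcases hx' with h2 | h2 | h2
      · exact absurd h2 (by simp)
      · right; left
        refine ⟨rfl, ?_⟩
        injection h2 with h2
        rw [Prod.mk.injEq] at h2
        exact h2
      · exact absurd h2 (by simp)
    · rcases hx' with h2 | h2 | h2
      · exact absurd h2 (by simp)
      · exact absurd h2 (by simp)
      · right; right
        refine ⟨rfl, ?_⟩
        injection h2 with h2; injection h2 with h2
        rw [Prod.mk.injEq] at h2
        exact h2
  have hA := key a ha ha'
  have hB := key b hb hb'
  have hval : ∀ (s s' : {p : α × β // G.Adj (Sum.inl p.1) (Sum.inr p.2)}),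
      s.val.1 = s'.val.1 → s.val.2 = s'.val.2 → s = s' := by
    intro s s' h1 h2; exact Subtype.ext (Prod.ext h1 h2)
  rcases hA with ⟨hx, e1⟩ | ⟨hx, e1, e1'⟩ | ⟨hx, e1, e1'⟩ <;>
      rcases hB with ⟨hy, e2⟩ | ⟨hy, e2, e2'⟩ | ⟨hy, e2, e2'⟩
  · exact absurd (hx.trans hy.symm) hab
  · exact Prod.ext e2 e1
  · exact Prod.ext e2 e1
  · exact Prod.ext e1 e2
  · exact absurd (hx.trans hy.symm) hab
  · exact Prod.ext e1 (hval _ _ e1' e2')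
  · exact Prod.ext e1 e2
  · exact Prod.ext e1 (hval _ _ e2' e1')
  · exact absurd (hx.trans hy.symm) hab

private def pB : (Fin q × α) ⊕ ((Fin q × β) ⊕ {p : α × β // G.Adj (Sum.inl p.1) (Sum.inr p.2)}) → Bool
  | Sum.inr (Sum.inr _) => true
  | _ => false

private def pL : (Fin q × α) ⊕ ((Fin q × β) ⊕ {p : α × β // G.Adj (Sum.inl p.1) (Sum.inr p.2)}) → Bool
  | Sum.inl _ => true
  | _ => false

private def hproj : (Fin q × α) ⊕ ((Fin q × β) ⊕ {p : α × β // G.Adj (Sum.inl p.1) (Sum.inr p.2)}) → α ⊕ β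
  | Sum.inl x => Sum.inl x.2
  | Sum.inr (Sum.inl y) => Sum.inr y.2
  | Sum.inr (Sum.inr s) => Sum.inl s.val.1

end AuxHG

private lemma buildWalk {W : Type*} {G' : SimpleGraph W} (u : ℕ → W) (P : Sym2 W)
    (Bad : ℕ → Prop) [DecidablePred Bad] :
    ∀ N : ℕ, (∀ n, n < N → ((Bad n → u n = u (n+1)) ∧
        (¬ Bad n → u n = u (n+1) ∨ (G'.Adj (u n) (u (n+1)) ∧ s(u n, u (n+1)) ≠ P)))) →
    ∃ w : G'.Walk (u 0) (u N), P ∉ w.edges ∧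
      w.length + ((Finset.range N).filter Bad).card ≤ N := by
  intro N
  induction N with
  | zero => intro _; exact ⟨SimpleGraph.Walk.nil, by simp, by simp⟩
  | succ N ih =>
    intro hstep
    obtain ⟨w, hw1, hw2⟩ := ih (fun n hn => hstep n (by omega))
    have hfs : (Finset.range (N+1)).filter Bad =
        if Bad N then insert N ((Finset.range N).filter Bad) else (Finset.range N).filter Bad := by
      rw [Finset.range_add_one, Finset.filter_insert]
    by_cases hb : Bad N
    · refine ⟨w.copy rfl ((hstep N (by omega)).1 hb), ?_, ?_⟩
      · simpa using hw1
      · rw [SimpleGraph.Walk.length_copy, hfs, if_pos hb]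
        have := Finset.card_insert_le N ((Finset.range N).filter Bad)
        omega
    · rcases (hstep N (by omega)).2 hb with he | ⟨hadj, hP⟩
      · refine ⟨w.copy rfl he, ?_, ?_⟩
        · simpa using hw1
        · rw [SimpleGraph.Walk.length_copy, hfs, if_neg hb]; omega
      · refine ⟨w.append hadj.toWalk, ?_, ?_⟩
        · rw [SimpleGraph.Walk.edges_append]
          intro hmem
          rcases List.mem_append.mp hmem with h1 | h2
          · exact hw1 h1
          · simp only [SimpleGraph.Adj.toWalk, SimpleGraph.Walk.edges_cons,
              SimpleGraph.Walk.edges_nil, List.mem_singleton] at h2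
            exact hP (h2 ▸ rfl)
        · rw [SimpleGraph.Walk.length_append, hfs, if_neg hb]
          simp only [SimpleGraph.Adj.toWalk, SimpleGraph.Walk.length_cons,
            SimpleGraph.Walk.length_nil]
          omega

theorem stmt_12 {α β : Type*} [Fintype α] [Fintype β] [DecidableEq α] [DecidableEq β]
    (k q : ℕ) (hk : 2 ≤ k) (hq : 1 ≤ q)
    (G : SimpleGraph (α ⊕ β)) [DecidableRel G.Adj]
    (hBipL : ∀ a a' : α, ¬ G.Adj (Sum.inl a) (Sum.inl a'))
    (hBipR : ∀ b b' : β, ¬ G.Adj (Sum.inr b) (Sum.inr b'))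
    (hGirth : ((2 * k : ℕ) : ℕ∞) ≤ G.girth)
    (H : Finset (Finset ((Fin q × α) ⊕ ((Fin q × β) ⊕
        {p : α × β // G.Adj (Sum.inl p.1) (Sum.inr p.2)}))))
    (hH : H = (univ : Finset (Fin q × {p : α × β // G.Adj (Sum.inl p.1) (Sum.inr p.2)})).image
      (fun tp => ({Sum.inr (Sum.inr tp.2), Sum.inl (tp.1, tp.2.val.1),
        Sum.inr (Sum.inl (tp.1, tp.2.val.2))} : Finset _))) :
    IsLinear H ∧ ∀ k', 1 ≤ k' → k' ≤ k → ¬ HasLinearCycle H (2 * k' + 1) := by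
  classical
  subst hH
  constructor
  · -- Linearity
    intro e he f hf hef
    by_contra hcard
    push_neg at hcard
    obtain ⟨a, haa, b, hbb, hab⟩ := Finset.one_lt_card.mp hcard
    rw [Finset.mem_image] at he hf
    obtain ⟨te, -, he'⟩ := he
    obtain ⟨tf, -, hf'⟩ := hf
    have he2 : hedge (G := G) te = e := he'
    have hf2 : hedge (G := G) tf = f := hf'
    rw [Finset.mem_inter] at haa hbb
    rw [← he2, ← hf2] at haa hbb
    have : te = tf := hedge_shared haa.1 haa.2 hbb.1 hbb.2 hab
    rw [← he2, ← hf2, this] at hef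
    exact hef rfl
  · rintro k' hk1 hk2 ⟨v, h, hvinj, hhinj, hmem, hcons, hdisj⟩
    haveI : NeZero (2 * k' + 1) := ⟨by omega⟩
    -- basic facts
    have hone : (1 : ZMod (2 * k' + 1)) ≠ 0 := by
      intro h1
      have h2 : ((1:ℕ) : ZMod (2 * k' + 1)) = 0 := by exact_mod_cast h1
      rw [ZMod.natCast_eq_zero_iff] at h2
      have := Nat.le_of_dvd one_pos h2
      omega
    have hsucc : ∀ i : ZMod (2 * k' + 1), i + 1 ≠ i := by
      intro i hi
      rw [add_eq_left] at hi
      exact hone hi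
    have hvne : ∀ i : ZMod (2 * k' + 1), v (i+1) ≠ v i := fun i he => hsucc i (hvinj he)
    have hhne : ∀ i : ZMod (2 * k' + 1), h (i+1) ≠ h i := fun i he => hsucc i (hhinj he)
    have hrep : ∀ i : ZMod (2 * k' + 1), ∃ tp, hedge (G := G) tp = h i := by
      intro i
      obtain ⟨tp, -, htp⟩ := Finset.mem_image.mp (hmem i)
      exact ⟨tp, htp⟩
    choose tp htp using hrep
    have htpne : ∀ i : ZMod (2 * k' + 1), tp (i+1) ≠ tp i := by
      intro i he
      exact hhne i (by rw [← htp, ← htp, he])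
    have helem : ∀ (i : ZMod (2 * k' + 1)) x, x ∈ h i →
        (x = Sum.inr (Sum.inr (tp i).2) ∨ x = Sum.inl ((tp i).1, (tp i).2.val.1) ∨
         x = Sum.inr (Sum.inl ((tp i).1, (tp i).2.val.2))) := by
      intro i x hx
      exact mem_hedge.mp ((htp i) ▸ hx)
    have hv2 : ∀ i : ZMod (2 * k' + 1), v (i+1) ∈ h i := by
      intro i
      have h2 : v (i+1) ∈ h i ∩ h (i+1) := by
        rw [hcons i]; exact Finset.mem_singleton_self _
      exact (Finset.mem_inter.mp h2).1
    have hv2' : ∀ i : ZMod (2 * k' + 1), v (i+1) ∈ h (i+1) := by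
      intro i
      have h2 : v (i+1) ∈ h i ∩ h (i+1) := by
        rw [hcons i]; exact Finset.mem_singleton_self _
      exact (Finset.mem_inter.mp h2).2
    have hv1 : ∀ i : ZMod (2 * k' + 1), v i ∈ h i := by
      intro i
      have h2 := hv2' (i-1)
      rwa [sub_add_cancel] at h2
    -- elem extraction helpers
    have hBelem : ∀ (i : ZMod (2 * k' + 1)) x, x ∈ h i → pB (q := q) (G := G) x = true →
        x = Sum.inr (Sum.inr (tp i).2) := by
      intro i x hx hb
      rcases helem i x hx with hh | hh | hh
      · exact hh
      · rw [hh] at hb; exact absurd hb (by simp [pB])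
      · rw [hh] at hb; exact absurd hb (by simp [pB])
    have hLelem : ∀ (i : ZMod (2 * k' + 1)) x, x ∈ h i → pL (q := q) (G := G) x = true →
        x = Sum.inl ((tp i).1, (tp i).2.val.1) := by
      intro i x hx hb
      rcases helem i x hx with hh | hh | hh
      · rw [hh] at hb; exact absurd hb (by simp [pL])
      · exact hh
      · rw [hh] at hb; exact absurd hb (by simp [pL])
    have hRelem : ∀ (i : ZMod (2 * k' + 1)) x, x ∈ h i → pB (q := q) (G := G) x = false →
        pL (q := q) (G := G) x = false → x = Sum.inr (Sum.inl ((tp i).1, (tp i).2.val.2)) := by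
      intro i x hx hb hl
      rcases helem i x hx with hh | hh | hh
      · rw [hh] at hb; exact absurd hb (by simp [pB])
      · rw [hh] at hl; exact absurd hl (by simp [pL])
      · exact hh
    have hBstep : ∀ i : ZMod (2 * k' + 1), pB (q := q) (G := G) (v (i+1)) = true →
        (tp i).2 = (tp (i+1)).2 ∧ (tp i).1 ≠ (tp (i+1)).1 := by
      intro i hb
      have e1 := hBelem i _ (hv2 i) hb
      have e2 := hBelem (i+1) _ (hv2' i) hb
      have hs2 : (tp i).2 = (tp (i+1)).2 := by
        have := e1.symm.trans e2
        injection this with h'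
        injection h' with h'
      refine ⟨hs2, fun h1 => ?_⟩
      exact htpne i (Prod.ext h1.symm hs2.symm)
    have hnotBB : ∀ i : ZMod (2 * k' + 1), pB (q := q) (G := G) (v i) = true →
        pB (q := q) (G := G) (v (i+1)) = true → False := by
      intro i h1 h2
      have e1 := hBelem i _ (hv1 i) h1
      have e2 := hBelem i _ (hv2 i) h2
      exact hvne i (e2.trans e1.symm)
    have hnotLL : ∀ i : ZMod (2 * k' + 1), pL (q := q) (G := G) (v i) = true →
        pL (q := q) (G := G) (v (i+1)) = true → False := by
      intro i h1 h2
      have e1 := hLelem i _ (hv1 i) h1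
      have e2 := hLelem i _ (hv2 i) h2
      exact hvne i (e2.trans e1.symm)
    have hnotRR : ∀ i : ZMod (2 * k' + 1), pB (q := q) (G := G) (v i) = false →
        pL (q := q) (G := G) (v i) = false →
        pB (q := q) (G := G) (v (i+1)) = false →
        pL (q := q) (G := G) (v (i+1)) = false → False := by
      intro i hb1 hl1 hb2 hl2
      have e1 := hRelem i _ (hv1 i) hb1 hl1
      have e2 := hRelem i _ (hv2 i) hb2 hl2
      exact hvne i (e2.trans e1.symm)
    have hLRstep : ∀ i : ZMod (2 * k' + 1), pB (q := q) (G := G) (v (i+1)) = false →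
        (tp i).1 = (tp (i+1)).1 := by
      intro i hb
      by_cases hl : pL (q := q) (G := G) (v (i+1)) = true
      · have e1 := hLelem i _ (hv2 i) hl
        have e2 := hLelem (i+1) _ (hv2' i) hl
        have := e1.symm.trans e2
        injection this with h'
        rw [Prod.mk.injEq] at h'
        exact h'.1
      · rw [Bool.not_eq_true] at hl
        have e1 := hRelem i _ (hv2 i) hb hl
        have e2 := hRelem (i+1) _ (hv2' i) hb hl
        have := e1.symm.trans e2
        injection this with h'; injection h' with h'
        rw [Prod.mk.injEq] at h'
        exact h'.1
    have hsEq : ∀ i : ZMod (2 * k' + 1), (tp i).2 = (tp (i+1)).2 →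
        pB (q := q) (G := G) (v (i+1)) = true := by
      intro i he
      have hx1 : (Sum.inr (Sum.inr (tp i).2) :
          (Fin q × α) ⊕ ((Fin q × β) ⊕ {p : α × β // G.Adj (Sum.inl p.1) (Sum.inr p.2)})) ∈ h i := by
        rw [← htp i]; exact mem_hedge.mpr (Or.inl rfl)
      have hx2 : (Sum.inr (Sum.inr (tp i).2) :
          (Fin q × α) ⊕ ((Fin q × β) ⊕ {p : α × β // G.Adj (Sum.inl p.1) (Sum.inr p.2)})) ∈ h (i+1) := by
        rw [← htp (i+1)]; exact mem_hedge.mpr (Or.inl (by rw [he]))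
      have hx3 : (Sum.inr (Sum.inr (tp i).2) :
          (Fin q × α) ⊕ ((Fin q × β) ⊕ {p : α × β // G.Adj (Sum.inl p.1) (Sum.inr p.2)}))
          ∈ ({v (i+1)} : Finset _) := by
        rw [← hcons i]; exact Finset.mem_inter.mpr ⟨hx1, hx2⟩
      rw [Finset.mem_singleton] at hx3
      rw [← hx3]; rfl
    have hW1 : ∀ i : ZMod (2 * k' + 1), pB (q := q) (G := G) (v i) = false →
        pB (q := q) (G := G) (v (i+1)) = false →
        G.Adj (hproj (v i)) (hproj (v (i+1))) ∧
        s(hproj (v i), hproj (v (i+1))) =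
          s(Sum.inl (tp i).2.val.1, Sum.inr (tp i).2.val.2) := by
      intro i hb1 hb2
      by_cases hl1 : pL (q := q) (G := G) (v i) = true
      · have e1 := hLelem i _ (hv1 i) hl1
        by_cases hl2 : pL (q := q) (G := G) (v (i+1)) = true
        · exact (hnotLL i hl1 hl2).elim
        · rw [Bool.not_eq_true] at hl2
          have e2 := hRelem i _ (hv2 i) hb2 hl2
          rw [e1, e2]
          exact ⟨(tp i).2.property, rfl⟩
      · rw [Bool.not_eq_true] at hl1
        have e1 := hRelem i _ (hv1 i) hb1 hl1
        by_cases hl2 : pL (q := q) (G := G) (v (i+1)) = true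
        · have e2 := hLelem i _ (hv2 i) hl2
          rw [e1, e2]
          exact ⟨((tp i).2.property).symm, Sym2.eq_swap⟩
        · rw [Bool.not_eq_true] at hl2
          exact (hnotRR i hb1 hl1 hb2 hl2).elim
    have hW2 : ∀ i : ZMod (2 * k' + 1), pB (q := q) (G := G) (v (i+1)) = true →
        hproj (v i) = hproj (v (i+1+1)) ∨
        (G.Adj (hproj (v i)) (hproj (v (i+1+1))) ∧
         s(hproj (v i), hproj (v (i+1+1))) =
           s(Sum.inl (tp i).2.val.1, Sum.inr (tp i).2.val.2)) := by
      intro i hb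
      have hs := (hBstep i hb).1
      have hb1 : pB (q := q) (G := G) (v i) = false := by
        cases hq1 : pB (q := q) (G := G) (v i)
        · rfl
        · exact (hnotBB i hq1 hb).elim
      have hb2 : pB (q := q) (G := G) (v (i+1+1)) = false := by
        cases hq1 : pB (q := q) (G := G) (v (i+1+1))
        · rfl
        · exact (hnotBB (i+1) hb hq1).elim
      have hs1 : (tp (i+1)).2.val.1 = (tp i).2.val.1 := by rw [← hs]
      have hs2 : (tp (i+1)).2.val.2 = (tp i).2.val.2 := by rw [← hs]
      by_cases hl1 : pL (q := q) (G := G) (v i) = true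
      · have e1 := hLelem i _ (hv1 i) hl1
        by_cases hl2 : pL (q := q) (G := G) (v (i+1+1)) = true
        · have e2 := hLelem (i+1) _ (hv2 (i+1)) hl2
          left; rw [e1, e2]
          show Sum.inl (tp i).2.val.1 = Sum.inl (tp (i+1)).2.val.1
          rw [hs1]
        · rw [Bool.not_eq_true] at hl2
          have e2 := hRelem (i+1) _ (hv2 (i+1)) hb2 hl2
          right; rw [e1, e2]
          show G.Adj (Sum.inl (tp i).2.val.1) (Sum.inr (tp (i+1)).2.val.2) ∧ _
          rw [hs2]
          exact ⟨(tp i).2.property, rfl⟩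
      · rw [Bool.not_eq_true] at hl1
        have e1 := hRelem i _ (hv1 i) hb1 hl1
        by_cases hl2 : pL (q := q) (G := G) (v (i+1+1)) = true
        · have e2 := hLelem (i+1) _ (hv2 (i+1)) hl2
          right; rw [e1, e2]
          show G.Adj (Sum.inr (tp i).2.val.2) (Sum.inl (tp (i+1)).2.val.1) ∧ _
          rw [hs1]
          exact ⟨((tp i).2.property).symm, Sym2.eq_swap⟩
        · rw [Bool.not_eq_true] at hl2
          have e2 := hRelem (i+1) _ (hv2 (i+1)) hb2 hl2
          left; rw [e1, e2]
          show Sum.inr (tp i).2.val.2 = Sum.inr (tp (i+1)).2.val.2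
          rw [hs2]
    have hcastn : ∀ n : ℕ, ((n+1:ℕ) : ZMod (2*k'+1)) = ((n:ℕ) : ZMod (2*k'+1)) + 1 := by
      intro n; push_cast; ring
    have hdvd : ∀ n : ℕ, 0 < n → n < 2*k'+1 → ((n:ℕ) : ZMod (2*k'+1)) ≠ 0 := by
      intro n h1 h2 he
      rw [ZMod.natCast_eq_zero_iff] at he
      have := Nat.le_of_dvd h1 he
      omega
    by_cases hB0 : ∀ i : ZMod (2*k'+1), pB (q := q) (G := G) (v i) = false
    · -- parity case: types alternate L/R around an odd cycle, impossible
      have halt : ∀ i, pL (q := q) (G := G) (v (i+1)) = !pL (q := q) (G := G) (v i) := by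
        intro i
        cases hq1 : pL (q := q) (G := G) (v i) <;> cases hq2 : pL (q := q) (G := G) (v (i+1))
        · exact (hnotRR i (hB0 i) hq1 (hB0 (i+1)) hq2).elim
        · rfl
        · rfl
        · exact (hnotLL i hq1 hq2).elim
      have hiter : ∀ n : ℕ, pL (q := q) (G := G) (v ((n:ℕ) : ZMod (2*k'+1))) =
          (if n % 2 = 0 then pL (q := q) (G := G) (v 0) else !pL (q := q) (G := G) (v 0)) := by
        intro n
        induction n with
        | zero => simp
        | succ n ih =>
          rw [hcastn, halt, ih]
          by_cases hpar : n % 2 = 0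
          · rw [if_pos hpar, if_neg (by omega)]
          · rw [if_neg hpar, if_pos (by omega), Bool.not_not]
      have hfin := hiter (2*k'+1)
      rw [ZMod.natCast_self, if_neg (by omega)] at hfin
      exact absurd hfin (by simp)
    · push_neg at hB0
      obtain ⟨b₁, hb₁⟩ := hB0
      have hb₁' : pB (q := q) (G := G) (v b₁) = true := by
        cases hq1 : pB (q := q) (G := G) (v b₁)
        · exact absurd hq1 hb₁
        · rfl
      by_cases hB1 : ∀ j, pB (q := q) (G := G) (v j) = true → j = b₁
      · -- exactly one B vertex: the copy index changes exactly once around the cycle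
        have hchain : ∀ n : ℕ, n ≤ 2*k' → (tp (b₁ + (n:ℕ))).1 = (tp b₁).1 := by
          intro n
          induction n with
          | zero => simp
          | succ n ih =>
            intro hn
            have hne : b₁ + ((n:ℕ) : ZMod (2*k'+1)) + 1 ≠ b₁ := by
              intro he
              rw [add_assoc] at he
              have h1 := add_eq_left.mp he
              rw [← hcastn] at h1
              exact hdvd (n+1) (by omega) (by omega) h1
            have hnb : pB (q := q) (G := G) (v (b₁ + ((n:ℕ) : ZMod (2*k'+1)) + 1)) = false := by
              cases hq1 : pB (q := q) (G := G) (v (b₁ + ((n:ℕ) : ZMod (2*k'+1)) + 1))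
              · rfl
              · exact absurd (hB1 _ hq1) hne
            have hstep := hLRstep (b₁ + ((n:ℕ) : ZMod (2*k'+1))) hnb
            rw [hcastn, ← add_assoc, ← hstep]
            exact ih (by omega)
        have hlast := hchain (2*k') le_rfl
        have hneg : ((2*k' : ℕ) : ZMod (2*k'+1)) = -1 := by
          have h0 := ZMod.natCast_self (2*k'+1)
          push_cast at h0 ⊢
          linear_combination h0
        rw [hneg] at hlast
        have hBs := hBstep (b₁ - 1) (by rw [sub_add_cancel]; exact hb₁')
        rw [sub_add_cancel] at hBs
        apply hBs.2
        rw [show b₁ - 1 = b₁ + (-1) from by ring]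
        exact hlast
      · -- at least two B vertices
        push_neg at hB1
        obtain ⟨b₂, hb₂, hbne⟩ := hB1
        have hneg : ((2*k' : ℕ) : ZMod (2*k'+1)) = -1 := by
          have h0 := ZMod.natCast_self (2*k'+1)
          push_cast at h0 ⊢
          linear_combination h0
        -- there is a "gap": two consecutive non-B vertices
        have hgap : ∃ i, pB (q := q) (G := G) (v i) = false ∧
            pB (q := q) (G := G) (v (i+1)) = false := by
          by_contra hcon
          push_neg at hcon
          have hstep2 : ∀ x, pB (q := q) (G := G) (v x) = true →
              pB (q := q) (G := G) (v (x + 1 + 1)) = true := by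
            intro x hx
            have h1 : pB (q := q) (G := G) (v (x+1)) = false := by
              cases hq1 : pB (q := q) (G := G) (v (x+1))
              · rfl
              · exact (hnotBB x hx hq1).elim
            cases hq1 : pB (q := q) (G := G) (v (x+1+1))
            · exact ((hcon (x+1) h1) hq1).elim
            · rfl
          have hiter2 : ∀ n : ℕ,
              pB (q := q) (G := G) (v (b₁ + ((2*n : ℕ) : ZMod (2*k'+1)))) = true := by
            intro n
            induction n with
            | zero => simpa using hb₁'
            | succ n ih =>
              have hc : ((2*(n+1) : ℕ) : ZMod (2*k'+1)) =
                  ((2*n : ℕ) : ZMod (2*k'+1)) + 1 + 1 := by push_cast; ring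
              rw [hc, ← add_assoc, ← add_assoc]
              exact hstep2 _ ih
          have hfin := hiter2 (k'+1)
          have hc2 : ((2*(k'+1) : ℕ) : ZMod (2*k'+1)) = 1 := by
            have h0 := ZMod.natCast_self (2*k'+1)
            push_cast at h0 ⊢
            linear_combination h0
          rw [hc2] at hfin
          have h1 : pB (q := q) (G := G) (v (b₁+1)) = false := by
            cases hq1 : pB (q := q) (G := G) (v (b₁+1))
            · rfl
            · exact (hnotBB b₁ hb₁' hq1).elim
          rw [hfin] at h1
          exact Bool.noConfusion h1
        obtain ⟨istar, hg1, hg2⟩ := hgap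
        -- the edge at the gap is distinct from all other edges of the cycle
        have hsstar : ∀ j, j ≠ istar → (tp j).2 ≠ (tp istar).2 := by
          intro j hj heq
          by_cases hj1 : j = istar + 1
          · subst hj1
            have h2 := hsEq istar heq.symm
            rw [h2] at hg2
            exact Bool.noConfusion hg2
          · by_cases hj2 : istar = j + 1
            · have h2 := hsEq j (by rw [← hj2]; exact heq)
              rw [← hj2] at h2
              rw [h2] at hg1
              exact Bool.noConfusion hg1
            · have hd := hdisj istar j hj hj1 hj2
              have hx1 : Sum.inr (Sum.inr (tp istar).2) ∈ h istar := by
                rw [← htp istar]; exact mem_hedge.mpr (Or.inl rfl)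
              have hx2 : Sum.inr (Sum.inr (tp istar).2) ∈ h j := by
                rw [← htp j]; exact mem_hedge.mpr (Or.inl (by rw [heq]))
              have h3 := Finset.mem_inter.mpr ⟨hx1, hx2⟩
              rw [hd] at h3
              exact absurd h3 (Finset.notMem_empty _)
        have hkey : ∀ j, j ≠ istar →
            s((Sum.inl (tp j).2.val.1 : α ⊕ β), Sum.inr (tp j).2.val.2) ≠
            s((Sum.inl (tp istar).2.val.1 : α ⊕ β), Sum.inr (tp istar).2.val.2) := by
          intro j hj heq
          rw [Sym2.eq_iff] at heq
          rcases heq with ⟨h1, h2⟩ | ⟨h1, h2⟩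
          · injection h1 with h1
            injection h2 with h2
            exact hsstar j hj (Subtype.ext (Prod.ext h1 h2))
          · exact absurd h1 (by simp)
        set u : ℕ → α ⊕ β := fun n =>
          if pB (q := q) (G := G) (v (istar + 1 + (n:ℕ))) = true
          then hproj (v (istar + 1 + (n:ℕ) + 1)) else hproj (v (istar + 1 + (n:ℕ))) with hu
        have hnes : ∀ n : ℕ, n < 2*k' → istar + 1 + ((n:ℕ) : ZMod (2*k'+1)) ≠ istar := by
          intro n hn he
          have h1 : ((n+1:ℕ) : ZMod (2*k'+1)) = 0 := by
            rw [hcastn]; linear_combination he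
          exact hdvd (n+1) (by omega) (by omega) h1
        have hstep : ∀ n, n < 2*k' →
            ((pB (q := q) (G := G) (v (istar + 1 + (n:ℕ))) = true → u n = u (n+1)) ∧
             (¬ (pB (q := q) (G := G) (v (istar + 1 + (n:ℕ))) = true) → u n = u (n+1) ∨
               (G.Adj (u n) (u (n+1)) ∧ s(u n, u (n+1)) ≠
                 s((Sum.inl (tp istar).2.val.1 : α ⊕ β), Sum.inr (tp istar).2.val.2)))) := by
          intro n hn
          have hidx : istar + 1 + ((n+1:ℕ) : ZMod (2*k'+1)) =
              istar + 1 + ((n:ℕ) : ZMod (2*k'+1)) + 1 := by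
            rw [hcastn]; ring
          constructor
          · intro hbad
            have hnb : pB (q := q) (G := G)
                (v (istar + 1 + ((n:ℕ):ZMod (2*k'+1)) + 1)) = false := by
              cases hq1 : pB (q := q) (G := G) (v (istar + 1 + ((n:ℕ):ZMod (2*k'+1)) + 1))
              · rfl
              · exact (hnotBB _ hbad hq1).elim
            simp only [hu]
            rw [if_pos hbad, hidx, if_neg (by simp [hnb])]
          · intro hbad
            rw [Bool.not_eq_true] at hbad
            by_cases hb2 : pB (q := q) (G := G)
                (v (istar + 1 + ((n:ℕ):ZMod (2*k'+1)) + 1)) = true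
            · have hW := hW2 (istar + 1 + ((n:ℕ):ZMod (2*k'+1))) hb2
              have hu1 : u n = hproj (v (istar + 1 + ((n:ℕ):ZMod (2*k'+1)))) := by
                simp only [hu]; rw [if_neg (by simp [hbad])]
              have hu2 : u (n+1) = hproj (v (istar + 1 + ((n:ℕ):ZMod (2*k'+1)) + 1 + 1)) := by
                simp only [hu]; rw [hidx, if_pos hb2]
              rw [hu1, hu2]
              rcases hW with he | ⟨ha, hs⟩
              · exact Or.inl he
              · exact Or.inr ⟨ha, by rw [hs]; exact hkey _ (hnes n hn)⟩
            · rw [Bool.not_eq_true] at hb2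
              have hW := hW1 (istar + 1 + ((n:ℕ):ZMod (2*k'+1))) hbad hb2
              have hu1 : u n = hproj (v (istar + 1 + ((n:ℕ):ZMod (2*k'+1)))) := by
                simp only [hu]; rw [if_neg (by simp [hbad])]
              have hu2 : u (n+1) = hproj (v (istar + 1 + ((n:ℕ):ZMod (2*k'+1)) + 1)) := by
                simp only [hu]; rw [hidx, if_neg (by simp [hb2])]
              rw [hu1, hu2]
              exact Or.inr ⟨hW.1, by rw [hW.2]; exact hkey _ (hnes n hn)⟩
        obtain ⟨w, hwP, hwlen⟩ := buildWalk u
          s((Sum.inl (tp istar).2.val.1 : α ⊕ β), Sum.inr (tp istar).2.val.2)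
          (fun n => pB (q := q) (G := G) (v (istar + 1 + (n:ℕ))) = true) (2*k') hstep
        have hu0 : u 0 = hproj (v (istar + 1)) := by
          simp only [hu, Nat.cast_zero, add_zero]
          rw [if_neg (by simp [hg2])]
        have huN : u (2*k') = hproj (v istar) := by
          simp only [hu, hneg]
          rw [show istar + 1 + (-1 : ZMod (2*k'+1)) = istar from by ring]
          rw [if_neg (by simp [hg1])]
        have hBc : 2 ≤ ((Finset.range (2*k')).filter
            (fun n => pB (q := q) (G := G) (v (istar + 1 + (n:ℕ))) = true)).card := by
          have hmemf : ∀ b : ZMod (2*k'+1), pB (q := q) (G := G) (v b) = true →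
              (b - (istar+1)).val ∈ Finset.range (2*k') ∧
              istar + 1 + (((b - (istar+1)).val : ℕ) : ZMod (2*k'+1)) = b := by
            intro b hbB
            have hval : (((b - (istar+1)).val : ℕ) : ZMod (2*k'+1)) = b - (istar+1) :=
              ZMod.natCast_zmod_val _
            constructor
            · rw [Finset.mem_range]
              have hlt := ZMod.val_lt (b - (istar+1))
              have hne : (b - (istar+1)).val ≠ 2*k' := by
                intro he
                have h2 : b - (istar+1) = ((2*k':ℕ) : ZMod (2*k'+1)) := by rw [← hval, he]
                rw [hneg] at h2
                have h3 : b = istar := by linear_combination h2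
                rw [h3, hg1] at hbB
                exact Bool.noConfusion hbB
              omega
            · rw [hval]; ring
          obtain ⟨hm1, he1⟩ := hmemf b₁ hb₁'
          obtain ⟨hm2, he2⟩ := hmemf b₂ hb₂
          have hne12 : (b₁ - (istar+1)).val ≠ (b₂ - (istar+1)).val := by
            intro he
            have h2 : b₁ - (istar+1) = b₂ - (istar+1) := by
              rw [← ZMod.natCast_zmod_val (b₁ - (istar+1)), he, ZMod.natCast_zmod_val]
            exact hbne (sub_left_inj.mp h2).symm
          have hsub : ({(b₁ - (istar+1)).val, (b₂ - (istar+1)).val} : Finset ℕ) ⊆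
              (Finset.range (2*k')).filter
                (fun n => pB (q := q) (G := G) (v (istar + 1 + (n:ℕ))) = true) := by
            intro x hx
            rcases Finset.mem_insert.mp hx with rfl | hx
            · exact Finset.mem_filter.mpr ⟨hm1, by rw [he1]; exact hb₁'⟩
            · rw [Finset.mem_singleton] at hx
              subst hx
              exact Finset.mem_filter.mpr ⟨hm2, by rw [he2]; exact hb₂⟩
          calc 2 = ({(b₁ - (istar+1)).val, (b₂ - (istar+1)).val} : Finset ℕ).card :=
                (Finset.card_pair hne12).symm
            _ ≤ _ := Finset.card_le_card hsub
        have hWs := hW1 istar hg1 hg2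
        set wc := w.copy hu0 huN with hwc
        have hPedge : s(hproj (v istar), hproj (v (istar+1))) ∉
            (wc.toPath : G.Walk (hproj (v (istar+1))) (hproj (v istar))).edges := by
          intro hmem2
          have h1 := SimpleGraph.Walk.edges_toPath_subset wc hmem2
          rw [hwc, SimpleGraph.Walk.edges_copy] at h1
          rw [hWs.2] at h1
          exact hwP h1
        have hcyc := SimpleGraph.Path.cons_isCycle wc.toPath hWs.1 hPedge
        have hlen2 : (SimpleGraph.Walk.cons hWs.1 (wc.toPath : G.Walk (hproj (v (istar+1))) (hproj (v istar)))).length ≤ 2*k' - 1 := by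
          rw [SimpleGraph.Walk.length_cons]
          have h1 : (wc.toPath : G.Walk (hproj (v (istar+1))) (hproj (v istar))).length ≤ wc.length :=
            SimpleGraph.Walk.length_bypass_le wc
          have h2 : wc.length = w.length := by rw [hwc, SimpleGraph.Walk.length_copy]
          omega
        have hg4 : G.egirth ≤
            ((SimpleGraph.Walk.cons hWs.1 (wc.toPath : G.Walk (hproj (v (istar+1))) (hproj (v istar)))).length : ℕ∞) :=
          SimpleGraph.le_egirth.mp le_rfl _ _ hcyc
        have hg5 : G.girth ≤ (SimpleGraph.Walk.cons hWs.1 (wc.toPath : G.Walk (hproj (v (istar+1))) (hproj (v istar)))).length := by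
          have h6 := ENat.toNat_le_toNat hg4 (ENat.coe_ne_top _)
          exact h6.trans (le_of_eq (ENat.toNat_coe _))
        have hg6 : 2*k ≤ G.girth := by exact_mod_cast hGirth
        omega
end
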